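/- Let f : [n] → [a,b] with r = b − a > 0 and bounds l = −u, u : {1,…,n−1} → ℝ with u(t) > 0 for all t, and u_M = max_t u(t). Then the number of violated unordered pairs of f is at least (L1(f,P)/4) · min{ 1/u_M, (n−1)/r }, where L1(f,P) is the unnormalized L1-distance of f to the property P of functions h : [n] → ℝ satisfying −u(t) ≤ h(t+1) − h(t) ≤ u(t) for all t. -/

import Mathlib

open Finset
open scoped Classical

/-- The one-dimensional quasimetric of bounds `(l,u)`. -/
def m1 (l u : ℕ → ℝ) (x y : ℕ) : ℝ :=
  (∑ t ∈ Finset.Ico y x, u t) - ∑ t ∈ Finset.Ico x y, l t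

/-- The violation score of a pair `(x,y)` for `h : [n] → ℝ`. -/
def vs1 (l u : ℕ → ℝ) (h : ℕ → ℝ) (x y : ℕ) : ℝ :=
  max (h x - h y - m1 l u x y) (h y - h x - m1 l u y x)

namespace S19

/-- symmetric version of the metric -/
def MM (u : ℕ → ℝ) (x y : ℕ) : ℝ :=
  (∑ t ∈ Finset.Ico y x, u t) + ∑ t ∈ Finset.Ico x y, u t

lemma m1_eq (u : ℕ → ℝ) (x y : ℕ) : m1 (fun t => -u t) u x y = MM u x y := by
  simp [m1, MM, sub_eq_add_neg]

lemma MM_comm (u : ℕ → ℝ) (x y : ℕ) : MM u x y = MM u y x := add_comm _ _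

lemma MM_of_le (u : ℕ → ℝ) {x y : ℕ} (h : x ≤ y) :
    MM u x y = ∑ t ∈ Finset.Ico x y, u t := by
  have : Finset.Ico y x = ∅ := Finset.Ico_eq_empty (by omega)
  simp [MM, this]

section main

variable (n : ℕ) (u f : ℕ → ℝ)

/-- property P as in the statement -/
def Pf (h : ℕ → ℝ) : Prop :=
  ∀ t : ℕ, 1 ≤ t → t + 1 ≤ n → -u t ≤ h (t + 1) - h t ∧ h (t + 1) - h t ≤ u t

def cost (h : ℕ → ℝ) : ℝ := ∑ t ∈ Finset.Icc 1 n, |f t - h t|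

noncomputable def Vset : Finset (ℕ × ℕ) :=
  ((Finset.Icc 1 n) ×ˢ (Finset.Icc 1 n)).filter
      (fun p : ℕ × ℕ => p.1 < p.2 ∧ 0 < vs1 (fun t => -u t) u f p.1 p.2)

variable {n u f}

lemma sum_Ico_nonneg (hu : ∀ t : ℕ, 1 ≤ t → t + 1 ≤ n → 0 < u t) {z w : ℕ}
    (hz : 1 ≤ z) (hw : w ≤ n) : (0:ℝ) ≤ ∑ t ∈ Finset.Ico z w, u t := by
  refine Finset.sum_nonneg (fun t ht => ?_)
  rw [Finset.mem_Ico] at ht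
  have h1 : 1 ≤ t := le_trans hz ht.1
  have h2 : t + 1 ≤ n := by omega
  exact le_of_lt (hu t h1 h2)

lemma MM_nonneg (hu : ∀ t : ℕ, 1 ≤ t → t + 1 ≤ n → 0 < u t) {x y : ℕ}
    (hx1 : 1 ≤ x) (hxn : x ≤ n) (hy1 : 1 ≤ y) (hyn : y ≤ n) : 0 ≤ MM u x y :=
  add_nonneg (sum_Ico_nonneg hu hy1 hxn) (sum_Ico_nonneg hu hx1 hyn)

lemma MM_add (u : ℕ → ℝ) {x z y : ℕ} (h1 : x ≤ z) (h2 : z ≤ y) :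
    MM u x y = MM u x z + MM u z y := by
  rw [MM_of_le u (le_trans h1 h2), MM_of_le u h1, MM_of_le u h2,
    ← Finset.sum_Ico_consecutive u h1 h2]

lemma MM_single (u : ℕ → ℝ) (t : ℕ) : MM u t (t+1) = u t := by
  rw [MM_of_le u (Nat.le_succ t)]
  simp

/-- a function in P is Lipschitz w.r.t. MM -/
lemma Pf_lip (h : ℕ → ℝ) (hP : Pf n u h) {x y : ℕ} (hx1 : 1 ≤ x) (hxy : x ≤ y)
    (hyn : y ≤ n) : h y - h x ≤ MM u x y := by
  induction y, hxy using Nat.le_induction with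
  | base => simp [MM]
  | succ m hm ih =>
    have hmn : m + 1 ≤ n := hyn
    have h1 := (hP m (le_trans hx1 hm) hmn).2
    have h2 := ih (by omega)
    have := MM_add u hm (Nat.le_succ m)
    rw [this, MM_single]
    linarith

lemma Pf_lip_rev (h : ℕ → ℝ) (hP : Pf n u h) {x y : ℕ} (hx1 : 1 ≤ x) (hxy : x ≤ y)
    (hyn : y ≤ n) : h x - h y ≤ MM u x y := by
  induction y, hxy using Nat.le_induction with
  | base => simp [MM]
  | succ m hm ih =>
    have hmn : m + 1 ≤ n := hyn
    have h1 := (hP m (le_trans hx1 hm) hmn).1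
    have h2 := ih (by omega)
    have h3 := MM_add u hm (Nat.le_succ m)
    rw [h3, MM_single]
    have hu0 : 0 ≤ u m + u m := by
      have := (hP m (le_trans hx1 hm) hmn).2
      linarith
    linarith

lemma Pf_lip' (h : ℕ → ℝ) (hP : Pf n u h) {x y : ℕ} (hx1 : 1 ≤ x) (hxn : x ≤ n)
    (hy1 : 1 ≤ y) (hyn : y ≤ n) : h y - h x ≤ MM u x y := by
  rcases le_total x y with hxy | hyx
  · exact Pf_lip h hP hx1 hxy hyn
  · rw [MM_comm]
    exact Pf_lip_rev h hP hy1 hyx hxn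


end main

section opt

variable {n : ℕ} {a b : ℝ} {u f : ℕ → ℝ}

/-- clamp to [a,b] -/
noncomputable def clampf (a b : ℝ) (g : ℕ → ℝ) : ℕ → ℝ := fun t => max a (min b (g t))

lemma abs_min_sub_min (b x y : ℝ) : |min b x - min b y| ≤ |x - y| := by
  have h1 := le_abs_self (x - y)
  have h2 := neg_abs_le (x - y)
  rw [abs_sub_le_iff]
  rcases le_total x b with h | h <;> rcases le_total y b with h' | h' <;>
    constructor <;> simp [min_eq_left, min_eq_right, *] <;> linarith

lemma abs_max_sub_max (a x y : ℝ) : |max a x - max a y| ≤ |x - y| := by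
  have h1 := le_abs_self (x - y)
  have h2 := neg_abs_le (x - y)
  rw [abs_sub_le_iff]
  rcases le_total a x with h | h <;> rcases le_total a y with h' | h' <;>
    constructor <;> simp [max_eq_left, max_eq_right, *] <;> linarith

lemma clampf_lip (a b : ℝ) (g : ℕ → ℝ) (s t : ℕ) :
    |clampf a b g t - clampf a b g s| ≤ |g t - g s| :=
  le_trans (abs_max_sub_max a _ _) (abs_min_sub_min b _ _)

lemma clampf_pf (hab : a ≤ b) (g : ℕ → ℝ) (hg : Pf n u g) : Pf n u (clampf a b g) := by
  intro t h1 h2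
  have := clampf_lip a b g t (t+1)
  have h3 := (hg t h1 h2).1
  have h4 := (hg t h1 h2).2
  have h5 : |g (t+1) - g t| ≤ u t := abs_le.mpr ⟨by linarith, h4⟩
  have h6 : |clampf a b g (t+1) - clampf a b g t| ≤ u t := le_trans (clampf_lip a b g t (t+1)) h5
  exact abs_le.mp h6

lemma clampf_mem (hab : a ≤ b) (g : ℕ → ℝ) (t : ℕ) :
    a ≤ clampf a b g t ∧ clampf a b g t ≤ b := by
  refine ⟨le_max_left _ _, ?_⟩
  rw [clampf, max_le_iff]
  exact ⟨hab, min_le_left _ _⟩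

lemma abs_clamp_le {x α β v : ℝ} (h1 : α ≤ v) (h2 : v ≤ β) :
    |v - max α (min β x)| ≤ |v - x| := by
  have hαβ : α ≤ β := le_trans h1 h2
  rcases le_total x α with h | h
  · rw [min_eq_right (le_trans h hαβ), max_eq_left h,
      abs_of_nonneg (by linarith), abs_of_nonneg (by linarith)]
    linarith
  · rcases le_total x β with h' | h'
    · rw [min_eq_right h', max_eq_right h]
    · rw [min_eq_left h', max_eq_right hαβ,
        abs_of_nonpos (by linarith), abs_of_nonpos (by linarith)]
      linarith

lemma clampf_cost (hab : a ≤ b)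
    (hf : ∀ t : ℕ, 1 ≤ t → t ≤ n → a ≤ f t ∧ f t ≤ b) (g : ℕ → ℝ) :
    cost n f (clampf a b g) ≤ cost n f g := by
  refine Finset.sum_le_sum (fun t ht => ?_)
  rw [Finset.mem_Icc] at ht
  exact abs_clamp_le (hf t ht.1 ht.2).1 (hf t ht.1 ht.2).2

lemma exists_opt (hab : a ≤ b)
    (hu : ∀ t : ℕ, 1 ≤ t → t + 1 ≤ n → 0 < u t)
    (hf : ∀ t : ℕ, 1 ≤ t → t ≤ n → a ≤ f t ∧ f t ≤ b) :
    ∃ h : ℕ → ℝ, Pf n u h ∧ (∀ t, a ≤ h t ∧ h t ≤ b) ∧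
      ∀ g, Pf n u g → cost n f h ≤ cost n f g := by
  set KS : Set (ℕ → ℝ) := {h | (∀ t, h t ∈ Set.Icc a b) ∧ Pf n u h} with hKS
  have hcomp : IsCompact KS := by
    have h1 : IsCompact (Set.univ.pi (fun _ : ℕ => Set.Icc a b)) :=
      isCompact_univ_pi (fun _ => isCompact_Icc)
    have h2 : KS = (Set.univ.pi (fun _ : ℕ => Set.Icc a b)) ∩ {h | Pf n u h} := by
      ext h
      simp only [hKS, Set.mem_setOf_eq, Set.mem_inter_iff, Set.mem_pi, Set.mem_univ,
        true_implies]
    rw [h2]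
    refine h1.inter_right ?_
    have : {h : ℕ → ℝ | Pf n u h} =
        ⋂ (t : ℕ) (_ : 1 ≤ t) (_ : t + 1 ≤ n),
          ({h : ℕ → ℝ | -u t ≤ h (t+1) - h t} ∩ {h | h (t+1) - h t ≤ u t}) := by
      ext h
      simp only [Set.mem_setOf_eq, Set.mem_iInter, Set.mem_inter_iff, Pf]
    rw [this]
    refine isClosed_iInter (fun t => isClosed_iInter (fun _ => isClosed_iInter (fun _ => ?_)))
    have hc : Continuous (fun h : ℕ → ℝ => h (t+1) - h t) :=
      (continuous_apply (t+1)).sub (continuous_apply t)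
    exact (isClosed_le continuous_const hc).inter (isClosed_le hc continuous_const)
  have hne : KS.Nonempty := by
    refine ⟨fun _ => a, ⟨fun t => Set.mem_Icc.mpr ⟨le_rfl, hab⟩, fun t h1 h2 => ?_⟩⟩
    have := hu t h1 h2
    constructor <;> simp <;> linarith
  have hcont : ContinuousOn (cost n f) KS := by
    refine Continuous.continuousOn ?_
    refine continuous_finset_sum _ (fun t _ => ?_)
    exact (continuous_const.sub (continuous_apply t)).abs
  obtain ⟨hstar, hmem, hmin⟩ := hcomp.exists_isMinOn hne hcont
  refine ⟨hstar, hmem.2, fun t => Set.mem_Icc.mp (hmem.1 t), fun g hg => ?_⟩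
  have h1 : clampf a b g ∈ KS :=
    ⟨fun t => Set.mem_Icc.mpr (clampf_mem hab g t), clampf_pf hab g hg⟩
  exact le_trans (hmin h1) (clampf_cost hab hf g)

end opt

section hall

variable {n : ℕ} {u g h : ℕ → ℝ}

/-- t lies on a tight peak-interval of p for h -/
def inPeak (u h : ℕ → ℝ) (p t : ℕ) : Prop :=
  (t ≤ p ∧ ∀ s ∈ Finset.Ico t p, h (s+1) = h s + u s) ∨
  (p ≤ t ∧ ∀ s ∈ Finset.Ico p t, h (s+1) = h s - u s)

lemma inPeak_self (p : ℕ) : inPeak u h p p := by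
  left
  simp

lemma run_up {l r : ℕ} (hlr : l ≤ r) (hrun : ∀ s ∈ Finset.Ico l r, h (s+1) = h s + u s) :
    h r - h l = ∑ s ∈ Finset.Ico l r, u s := by
  induction r, hlr using Nat.le_induction with
  | base => simp
  | succ m hm ih =>
    have h1 : ∀ s ∈ Finset.Ico l m, h (s+1) = h s + u s := by
      intro s hs
      rw [Finset.mem_Ico] at hs
      exact hrun s (Finset.mem_Ico.mpr ⟨hs.1, by omega⟩)
    have h2 := ih h1
    have h3 : h (m+1) = h m + u m := hrun m (Finset.mem_Ico.mpr ⟨hm, by omega⟩)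
    rw [Finset.sum_Ico_succ_top hm]
    linarith

lemma run_down {l r : ℕ} (hlr : l ≤ r) (hrun : ∀ s ∈ Finset.Ico l r, h (s+1) = h s - u s) :
    h r - h l = -∑ s ∈ Finset.Ico l r, u s := by
  induction r, hlr using Nat.le_induction with
  | base => simp
  | succ m hm ih =>
    have h1 : ∀ s ∈ Finset.Ico l m, h (s+1) = h s - u s := by
      intro s hs
      rw [Finset.mem_Ico] at hs
      exact hrun s (Finset.mem_Ico.mpr ⟨hs.1, by omega⟩)
    have h2 := ih h1
    have h3 : h (m+1) = h m - u m := hrun m (Finset.mem_Ico.mpr ⟨hm, by omega⟩)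
    rw [Finset.sum_Ico_succ_top hm]
    linarith

lemma inPeak_usable {p q : ℕ} (hq : inPeak u h p q) : MM u p q ≤ h p - h q := by
  rcases hq with ⟨hqp, hrun⟩ | ⟨hpq, hrun⟩
  · rw [MM_comm, MM_of_le u hqp, ← run_up hqp hrun]
  · rw [MM_of_le u hpq]
    have := run_down hpq hrun
    linarith

/-- The Hall condition, by a local perturbation of the optimal `h`. -/
lemma hall_plus (hu : ∀ t : ℕ, 1 ≤ t → t + 1 ≤ n → 0 < u t)
    (hP : Pf n u h)
    (hopt : ∀ g', Pf n u g' → cost n g h ≤ cost n g g')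
    (A : Finset ℕ) (hA : A ⊆ (Finset.Icc 1 n).filter (fun t => h t < g t)) :
    A.card ≤ (((Finset.Icc 1 n).filter (fun t => g t ≤ h t)).filter
      (fun q => ∃ p ∈ A, MM u p q ≤ h p - h q)).card := by
  rcases A.eq_empty_or_nonempty with rfl | hAne
  · simp
  set U : Finset ℕ := (Finset.Icc 1 n).filter (fun t => ∃ p ∈ A, inPeak u h p t) with hU
  have hAU : A ⊆ U := by
    intro p hp
    have hp1 := hA hp
    rw [Finset.mem_filter] at hp1
    exact Finset.mem_filter.mpr ⟨hp1.1, p, hp, inPeak_self p⟩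
  have hUIcc : U ⊆ Finset.Icc 1 n := Finset.filter_subset _ _
  -- boundary slack facts
  have hbdryR : ∀ t, t ∈ U → t + 1 ≤ n → t + 1 ∉ U → -u t < h (t+1) - h t := by
    intro t htU ht1n ht1U
    have htIcc := hUIcc htU
    rw [Finset.mem_Icc] at htIcc
    rw [hU, Finset.mem_filter] at htU
    obtain ⟨-, p, hpA, hpk⟩ := htU
    have hne : h (t+1) - h t ≠ -u t := by
      intro heq
      apply ht1U
      rw [hU, Finset.mem_filter]
      refine ⟨Finset.mem_Icc.mpr ⟨by omega, ht1n⟩, p, hpA, ?_⟩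
      have hpt : p ≤ t := by
        rcases hpk with ⟨hle, hrun⟩ | ⟨hle, hrun⟩
        · rcases Nat.eq_or_lt_of_le hle with rfl | hlt
          · exact le_rfl
          · exfalso
            apply ht1U
            rw [hU, Finset.mem_filter]
            refine ⟨Finset.mem_Icc.mpr ⟨by omega, ht1n⟩, p, hpA, Or.inl ⟨hlt, ?_⟩⟩
            intro s hs
            rw [Finset.mem_Ico] at hs
            exact hrun s (Finset.mem_Ico.mpr ⟨by omega, hs.2⟩)
        · exact hle
      rcases hpk with ⟨hle, hrun⟩ | ⟨hle, hrun⟩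
      · have : p = t := le_antisymm hpt hle
        subst this
        refine Or.inr ⟨by omega, ?_⟩
        intro s hs
        rw [Finset.mem_Ico] at hs
        have : s = p := by omega
        subst this
        linarith [heq]
      · refine Or.inr ⟨by omega, ?_⟩
        intro s hs
        rw [Finset.mem_Ico] at hs
        rcases Nat.lt_or_ge s t with hst | hst
        · exact hrun s (Finset.mem_Ico.mpr ⟨hs.1, hst⟩)
        · have : s = t := by omega
          subst this
          linarith [heq]
    have := (hP t (by omega) ht1n).1
    rcases lt_or_eq_of_le this with hlt | heq
    · exact hlt
    · exact absurd heq.symm hne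
  have hbdryL : ∀ t, 1 ≤ t → t ∉ U → t + 1 ∈ U → h (t+1) - h t < u t := by
    intro t ht1 htU ht1U
    have ht1Icc := hUIcc ht1U
    rw [Finset.mem_Icc] at ht1Icc
    rw [hU, Finset.mem_filter] at ht1U
    obtain ⟨-, p, hpA, hpk⟩ := ht1U
    have hne : h (t+1) - h t ≠ u t := by
      intro heq
      apply htU
      rw [hU, Finset.mem_filter]
      refine ⟨Finset.mem_Icc.mpr ⟨ht1, by omega⟩, p, hpA, ?_⟩
      have hpt : t + 1 ≤ p := by
        rcases hpk with ⟨hle, hrun⟩ | ⟨hle, hrun⟩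
        · exact hle
        · rcases Nat.eq_or_lt_of_le hle with h' | hlt
          · omega
          · exfalso
            apply htU
            rw [hU, Finset.mem_filter]
            refine ⟨Finset.mem_Icc.mpr ⟨ht1, by omega⟩, p, hpA, Or.inr ⟨by omega, ?_⟩⟩
            intro s hs
            rw [Finset.mem_Ico] at hs
            exact hrun s (Finset.mem_Ico.mpr ⟨hs.1, by omega⟩)
      refine Or.inl ⟨by omega, ?_⟩
      intro s hs
      rw [Finset.mem_Ico] at hs
      rcases Nat.lt_or_ge t s with hst | hst
      · rcases hpk with ⟨hle, hrun⟩ | ⟨hle, hrun⟩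
        · exact hrun s (Finset.mem_Ico.mpr ⟨by omega, hs.2⟩)
        · omega
      · have : s = t := by omega
        subst this
        linarith [heq]
    have := (hP t ht1 (by omega)).2
    rcases lt_or_eq_of_le this with hlt | heq
    · exact hlt
    · exact absurd heq hne
  -- the perturbation
  set Uplus := U.filter (fun t => h t < g t) with hUp
  set Unon := U.filter (fun t => ¬ h t < g t) with hUn
  set DR := (Finset.Icc 1 n).filter (fun t => t ∈ U ∧ t + 1 ≤ n ∧ t + 1 ∉ U) with hDR
  set DL := (Finset.Icc 1 n).filter (fun t => t ∉ U ∧ t + 1 ∈ U) with hDL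
  set cands : Finset ℝ := (Uplus.image (fun t => g t - h t) ∪
      DR.image (fun t => h (t+1) - h t + u t)) ∪
      DL.image (fun t => u t - (h (t+1) - h t)) with hcands
  have hAUp : A ⊆ Uplus := by
    intro p hp
    refine Finset.mem_filter.mpr ⟨hAU hp, ?_⟩
    have := hA hp
    rw [Finset.mem_filter] at this
    exact this.2
  have hUplusne : Uplus.Nonempty := hAne.mono hAUp
  have hcne : cands.Nonempty := by
    obtain ⟨t, ht⟩ := hUplusne
    exact ⟨g t - h t, Finset.mem_union_left _ (Finset.mem_union_left _
      (Finset.mem_image_of_mem _ ht))⟩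
  set δ := cands.min' hcne with hδ
  have hδle : ∀ x ∈ cands, δ ≤ x := fun x hx => Finset.min'_le _ x hx
  have hδpos : 0 < δ := by
    have hmem := cands.min'_mem hcne
    rw [← hδ] at hmem
    rw [hcands] at hmem
    rcases Finset.mem_union.mp hmem with hm | hm
    · rcases Finset.mem_union.mp hm with hm' | hm'
      · obtain ⟨t, ht, hte⟩ := Finset.mem_image.mp hm'
        rw [Finset.mem_filter] at ht
        linarith [ht.2, hte]
      · obtain ⟨t, ht, hte⟩ := Finset.mem_image.mp hm'
        rw [hDR, Finset.mem_filter] at ht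
        have := hbdryR t ht.2.1 ht.2.2.1 ht.2.2.2
        linarith
    · obtain ⟨t, ht, hte⟩ := Finset.mem_image.mp hm
      rw [hDL, Finset.mem_filter] at ht
      have ht1 : 1 ≤ t := (Finset.mem_Icc.mp ht.1).1
      have := hbdryL t ht1 ht.2.1 ht.2.2
      linarith
  set h2 : ℕ → ℝ := fun t => if t ∈ U then h t + δ else h t with hh2
  have hPf2 : Pf n u h2 := by
    intro t h1t h2t
    have hbase := hP t h1t h2t
    by_cases hcU : t ∈ U <;> by_cases hcU1 : t + 1 ∈ U
    · simp only [hh2, if_pos hcU, if_pos hcU1]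
      constructor <;> linarith [hbase.1, hbase.2]
    · have htDR : t ∈ DR := by
        rw [hDR, Finset.mem_filter, Finset.mem_Icc]
        exact ⟨⟨h1t, by omega⟩, hcU, h2t, hcU1⟩
      have hc : δ ≤ h (t+1) - h t + u t := hδle _ (Finset.mem_union_left _
        (Finset.mem_union_right _ (Finset.mem_image_of_mem _ htDR)))
      simp only [hh2, if_pos hcU, if_neg hcU1]
      constructor <;> linarith [hbase.1, hbase.2]
    · have htDL : t ∈ DL := by
        rw [hDL, Finset.mem_filter, Finset.mem_Icc]
        exact ⟨⟨h1t, by omega⟩, hcU, hcU1⟩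
      have hc : δ ≤ u t - (h (t+1) - h t) := hδle _ (Finset.mem_union_right _
        (Finset.mem_image_of_mem _ htDL))
      simp only [hh2, if_neg hcU, if_pos hcU1]
      constructor <;> linarith [hbase.1, hbase.2]
    · simp only [hh2, if_neg hcU, if_neg hcU1]
      exact hbase
  have hcost := hopt h2 hPf2
  -- cost difference computation
  have hGzero : ∀ t ∈ Finset.Icc 1 n, t ∉ U → (|g t - h2 t| - |g t - h t|) = 0 := by
    intro t _ htU
    simp [hh2, if_neg htU]
  have hdiff : cost n g h2 - cost n g h =
      ∑ t ∈ U, (|g t - h2 t| - |g t - h t|) := by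
    rw [cost, cost, ← Finset.sum_sub_distrib]
    exact (Finset.sum_subset hUIcc hGzero).symm
  have hsplitU : ∑ t ∈ U, (|g t - h2 t| - |g t - h t|) =
      ∑ t ∈ Uplus, (|g t - h2 t| - |g t - h t|) +
      ∑ t ∈ Unon, (|g t - h2 t| - |g t - h t|) := by
    rw [hUp, hUn]
    exact (Finset.sum_filter_add_sum_filter_not U _ _).symm
  have hvplus : ∀ t ∈ Uplus, (|g t - h2 t| - |g t - h t|) = -δ := by
    intro t ht
    have htU : t ∈ U := (Finset.mem_filter.mp ht).1
    have hlt : h t < g t := (Finset.mem_filter.mp ht).2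
    have hcd : δ ≤ g t - h t := hδle _ (Finset.mem_union_left _
      (Finset.mem_union_left _ (Finset.mem_image_of_mem _ ht)))
    simp only [hh2, if_pos htU]
    rw [abs_of_nonneg (by linarith), abs_of_nonneg (by linarith)]
    ring
  have hvnon : ∀ t ∈ Unon, (|g t - h2 t| - |g t - h t|) = δ := by
    intro t ht
    have htU : t ∈ U := (Finset.mem_filter.mp ht).1
    have hle : g t ≤ h t := not_lt.mp (Finset.mem_filter.mp ht).2
    simp only [hh2, if_pos htU]
    rw [abs_of_nonpos (by linarith), abs_of_nonpos (by linarith)]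
    ring
  have hsum : cost n g h2 - cost n g h =
      (Unon.card : ℝ) * δ - (Uplus.card : ℝ) * δ := by
    rw [hdiff, hsplitU, Finset.sum_congr rfl hvplus, Finset.sum_congr rfl hvnon]
    rw [Finset.sum_const, Finset.sum_const]
    simp [nsmul_eq_mul]
    ring
  have hcardle : (Uplus.card : ℝ) ≤ (Unon.card : ℝ) := by
    nlinarith [hcost, hsum, hδpos]
  have hcard : Uplus.card ≤ Unon.card := by exact_mod_cast hcardle
  refine le_trans (Finset.card_le_card hAUp) (le_trans hcard (Finset.card_le_card ?_))
  intro q hq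
  rw [hUn, Finset.mem_filter] at hq
  have hqU := hq.1
  rw [hU, Finset.mem_filter] at hqU
  obtain ⟨hqIcc, p, hpA, hpk⟩ := hqU
  refine Finset.mem_filter.mpr ⟨Finset.mem_filter.mpr ⟨hqIcc, not_lt.mp hq.2⟩,
    p, hpA, inPeak_usable hpk⟩

lemma Pf_neg (hP : Pf n u h) : Pf n u (fun t => -(h t)) := by
  intro t h1 h2
  have := hP t h1 h2
  constructor <;> simp <;> linarith [this.1, this.2]

lemma cost_neg (g h' : ℕ → ℝ) : cost n (fun t => -(g t)) h' = cost n g (fun t => -(h' t)) := by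
  refine Finset.sum_congr rfl (fun t _ => ?_)
  rw [← abs_neg]
  ring_nf

/-- Hall's theorem: the injection covering the `plus` points. -/
lemma exists_phi_plus (hu : ∀ t : ℕ, 1 ≤ t → t + 1 ≤ n → 0 < u t)
    (hP : Pf n u h)
    (hopt : ∀ g', Pf n u g' → cost n g h ≤ cost n g g') :
    ∃ φ : ℕ → ℕ, Set.InjOn φ ((Finset.Icc 1 n).filter (fun t => h t < g t) : Finset ℕ) ∧
      ∀ p ∈ (Finset.Icc 1 n).filter (fun t => h t < g t),
        φ p ∈ (Finset.Icc 1 n).filter (fun t => g t ≤ h t) ∧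
          MM u p (φ p) ≤ h p - h (φ p) := by
  set plusF := (Finset.Icc 1 n).filter (fun t => h t < g t) with hplusF
  set T : {x // x ∈ plusF} → Finset ℕ := fun p =>
    ((Finset.Icc 1 n).filter (fun t => g t ≤ h t)).filter
      (fun q => MM u (p : ℕ) q ≤ h (p : ℕ) - h q) with hT
  have hhall : ∀ s : Finset {x // x ∈ plusF}, s.card ≤ (s.biUnion T).card := by
    intro s
    set A : Finset ℕ := s.image Subtype.val with hA
    have hAcard : A.card = s.card := Finset.card_image_of_injective _ Subtype.val_injective
    have hAsub : A ⊆ plusF := by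
      intro x hx
      obtain ⟨y, hy, hyx⟩ := Finset.mem_image.mp hx
      rw [← hyx]
      exact y.2
    have h1 := hall_plus hu hP hopt A hAsub
    rw [hAcard] at h1
    refine le_trans h1 (Finset.card_le_card ?_)
    intro q hq
    rw [Finset.mem_filter] at hq
    obtain ⟨p, hpA, hpu⟩ := hq.2
    obtain ⟨y, hy, hyp⟩ := Finset.mem_image.mp hpA
    refine Finset.mem_biUnion.mpr ⟨y, hy, ?_⟩
    rw [hT, Finset.mem_filter]
    rw [hyp]
    exact ⟨hq.1, hpu⟩
  obtain ⟨F, hFinj, hFmem⟩ := (Finset.all_card_le_biUnion_card_iff_exists_injective T).mp hhall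
  refine ⟨fun p => if hp : p ∈ plusF then F ⟨p, hp⟩ else p, ?_, ?_⟩
  · intro x hx y hy hxy
    simp only [Finset.coe_sort_coe, Finset.mem_coe] at hx hy
    simp only [dif_pos hx, dif_pos hy] at hxy
    have := hFinj hxy
    exact congrArg Subtype.val this
  · intro p hp
    simp only [dif_pos hp]
    have := hFmem ⟨p, hp⟩
    rw [hT, Finset.mem_filter] at this
    exact ⟨this.1, this.2⟩

/-- The injection covering the `minus` points, by symmetry. -/
lemma exists_phi_minus (hu : ∀ t : ℕ, 1 ≤ t → t + 1 ≤ n → 0 < u t)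
    (hP : Pf n u h)
    (hopt : ∀ g', Pf n u g' → cost n g h ≤ cost n g g') :
    ∃ φ : ℕ → ℕ, Set.InjOn φ ((Finset.Icc 1 n).filter (fun t => g t < h t) : Finset ℕ) ∧
      ∀ m ∈ (Finset.Icc 1 n).filter (fun t => g t < h t),
        φ m ∈ (Finset.Icc 1 n).filter (fun t => h t ≤ g t) ∧
          MM u (φ m) m ≤ h (φ m) - h m := by
  have hP' : Pf n u (fun t => -(h t)) := Pf_neg hP
  have hopt' : ∀ g', Pf n u g' →
      cost n (fun t => -(g t)) (fun t => -(h t)) ≤ cost n (fun t => -(g t)) g' := by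
    intro g' hg'
    rw [cost_neg, cost_neg]
    have : cost n g (fun t => - - (h t)) = cost n g h := by
      simp
    rw [this]
    exact hopt _ (Pf_neg hg')
  obtain ⟨φ, hinj, hmem⟩ := exists_phi_plus (g := fun t => -(g t)) hu hP' hopt'
  have hsetEq : ((Finset.Icc 1 n).filter (fun t => -(h t) < -(g t))) =
      ((Finset.Icc 1 n).filter (fun t => g t < h t)) := by
    apply Finset.filter_congr
    intro t _
    simp
  refine ⟨φ, ?_, ?_⟩
  · rw [← hsetEq]
    exact hinj
  · intro m hm
    rw [← hsetEq] at hm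
    obtain ⟨h1, h2⟩ := hmem m hm
    rw [Finset.mem_filter] at h1
    constructor
    · refine Finset.mem_filter.mpr ⟨h1.1, by linarith [h1.2]⟩
    · rw [MM_comm]
      linarith [h2]

end hall

section comb

/-- Output of the matching combination step. -/
structure CombOut (P M Z : Finset ℕ) (R : ℕ → ℕ → Prop) where
  pairs : Finset (ℕ × ℕ)
  good : ∀ e ∈ pairs, (e.1 ∈ P ∪ Z) ∧ (e.2 ∈ M ∪ Z) ∧ (e.1 ∈ P ∨ e.2 ∈ M) ∧ R e.1 e.2
  disj : ∀ e ∈ pairs, ∀ e' ∈ pairs, e ≠ e' →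
    e.1 ≠ e'.1 ∧ e.2 ≠ e'.2 ∧ e.1 ≠ e'.2 ∧ e.2 ≠ e'.1
  nee : ∀ e ∈ pairs, e.1 ≠ e.2
  covP : ∀ p ∈ P, ∃ e ∈ pairs, e.1 = p
  covM : ∀ m ∈ M, ∃ e ∈ pairs, e.2 = m

def CombOut.extend {R : ℕ → ℕ → Prop} {P M Z P' M' Z' : Finset ℕ}
    (O : CombOut P' M' Z' R) (x y : ℕ)
    (hx1 : x ∈ P ∪ Z) (hy1 : y ∈ M ∪ Z) (hcost : x ∈ P ∨ y ∈ M) (hR : R x y)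
    (hxy : x ≠ y)
    (hP'sub : P' ⊆ P) (hM'sub : M' ⊆ M) (hZ'sub : Z' ⊆ Z)
    (hxP' : x ∉ P' ∪ Z') (hxM' : x ∉ M' ∪ Z')
    (hyP' : y ∉ P' ∪ Z') (hyM' : y ∉ M' ∪ Z')
    (hcovP : ∀ p ∈ P, p ≠ x → p ∈ P') (hcovM : ∀ m ∈ M, m ≠ y → m ∈ M') :
    CombOut P M Z R where
  pairs := insert (x, y) O.pairs
  good := by
    intro e he
    rcases Finset.mem_insert.mp he with rfl | he'
    · exact ⟨hx1, hy1, hcost, hR⟩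
    · obtain ⟨h1, h2, h3, h4⟩ := O.good e he'
      refine ⟨?_, ?_, ?_, h4⟩
      · rcases Finset.mem_union.mp h1 with h | h
        · exact Finset.mem_union_left _ (hP'sub h)
        · exact Finset.mem_union_right _ (hZ'sub h)
      · rcases Finset.mem_union.mp h2 with h | h
        · exact Finset.mem_union_left _ (hM'sub h)
        · exact Finset.mem_union_right _ (hZ'sub h)
      · rcases h3 with h | h
        · exact Or.inl (hP'sub h)
        · exact Or.inr (hM'sub h)
  disj := by
    have key : ∀ e ∈ O.pairs, x ≠ e.1 ∧ y ≠ e.2 ∧ x ≠ e.2 ∧ y ≠ e.1 := by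
      intro e he
      obtain ⟨h1, h2, _, _⟩ := O.good e he
      refine ⟨fun hc => hxP' (hc ▸ h1), fun hc => hyM' (hc ▸ h2),
        fun hc => hxM' (hc ▸ h2), fun hc => hyP' (hc ▸ h1)⟩
    intro e he e' he' hne
    rcases Finset.mem_insert.mp he with rfl | he2
    · rcases Finset.mem_insert.mp he' with h | he2'
      · exact absurd h.symm hne
      · obtain ⟨k1, k2, k3, k4⟩ := key e' he2'
        exact ⟨k1, k2, k3, k4⟩
    · rcases Finset.mem_insert.mp he' with rfl | he2'
      · obtain ⟨k1, k2, k3, k4⟩ := key e he2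
        exact ⟨k1.symm, k2.symm, k4.symm, k3.symm⟩
      · exact O.disj e he2 e' he2' hne
  nee := by
    intro e he
    rcases Finset.mem_insert.mp he with rfl | he'
    · exact hxy
    · exact O.nee e he'
  covP := by
    intro p hp
    by_cases hpx : p = x
    · exact ⟨(x, y), Finset.mem_insert_self _ _, hpx.symm⟩
    · obtain ⟨e, he, hee⟩ := O.covP p (hcovP p hp hpx)
      exact ⟨e, Finset.mem_insert_of_mem he, hee⟩
  covM := by
    intro m hm
    by_cases hmy : m = y
    · exact ⟨(x, y), Finset.mem_insert_self _ _, hmy.symm⟩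
    · obtain ⟨e, he, hee⟩ := O.covM m (hcovM m hm hmy)
      exact ⟨e, Finset.mem_insert_of_mem he, hee⟩

lemma comb (R : ℕ → ℕ → Prop) :
    ∀ (N : ℕ) (P M Z : Finset ℕ) (φ₁ φ₂ : ℕ → ℕ),
    P.card + M.card ≤ N →
    Disjoint P M → Disjoint P Z → Disjoint M Z →
    Set.InjOn φ₁ P → Set.InjOn φ₂ M →
    (∀ p ∈ P, φ₁ p ∈ M ∪ Z ∧ R p (φ₁ p)) →
    (∀ m ∈ M, φ₂ m ∈ P ∪ Z ∧ R (φ₂ m) m) →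
    (∀ p ∈ P, ∀ m ∈ M, φ₁ p = φ₂ m → φ₁ p ∈ Z → R p m) →
    Nonempty (CombOut P M Z R) := by
  intro N
  induction N with
  | zero =>
    intro P M Z φ₁ φ₂ hcard _ _ _ _ _ _ _ _
    have hP : P = ∅ := Finset.card_eq_zero.mp (by omega)
    have hM : M = ∅ := Finset.card_eq_zero.mp (by omega)
    subst hP; subst hM
    exact ⟨⟨∅, by simp, by simp, by simp, by simp, by simp⟩⟩
  | succ N ih =>
    intro P M Z φ₁ φ₂ hcard dPM dPZ dMZ inj1 inj2 h1 h2 hRt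
    set σ : ℕ → ℕ := fun x => if x ∈ P then φ₁ x else φ₂ x with hσ
    have hσP : ∀ x ∈ P, σ x = φ₁ x := fun x hx => if_pos hx
    have hσM : ∀ x ∈ M, σ x = φ₂ x := by
      intro x hx
      have : x ∉ P := Finset.disjoint_right.mp dPM hx
      exact if_neg this
    have dCZ : Disjoint (P ∪ M) Z := Finset.disjoint_union_left.mpr ⟨dPZ, dMZ⟩
    -- case I : a source with a costly target
    by_cases hI : ∃ x ∈ P ∪ M, (∀ y ∈ P ∪ M, σ y ≠ x) ∧ σ x ∈ P ∪ M
    · obtain ⟨x, hxC, hxsrc, hxtgt⟩ := hI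
      rcases Finset.mem_union.mp hxC with hxP | hxM
      · -- x ∈ P, pair (x, φ₁ x) with φ₁ x ∈ M
        set m := φ₁ x with hm
        have hmMZ := (h1 x hxP).1
        have hmM : m ∈ M := by
          rw [hσP x hxP] at hxtgt
          rcases Finset.mem_union.mp hmMZ with h | h
          · exact h
          · exfalso
            rcases Finset.mem_union.mp hxtgt with h' | h'
            · exact Finset.disjoint_left.mp dPZ h' h
            · exact Finset.disjoint_left.mp dMZ h' h
        have hrec := ih (P.erase x) (M.erase m) Z φ₁ φ₂
          (by have := Finset.card_erase_of_mem hxP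
              have := Finset.card_erase_of_mem hmM
              have h5 : 1 ≤ P.card := Finset.card_pos.mpr ⟨x, hxP⟩
              have h6 : 1 ≤ M.card := Finset.card_pos.mpr ⟨m, hmM⟩
              omega)
          (Finset.disjoint_of_subset_left (Finset.erase_subset _ _)
            (Finset.disjoint_of_subset_right (Finset.erase_subset _ _) dPM))
          (Finset.disjoint_of_subset_left (Finset.erase_subset _ _) dPZ)
          (Finset.disjoint_of_subset_left (Finset.erase_subset _ _) dMZ)
          (inj1.mono (Finset.coe_subset.mpr (Finset.erase_subset _ _)))
          (inj2.mono (Finset.coe_subset.mpr (Finset.erase_subset _ _)))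
          (by intro p hp
              have hpP := Finset.mem_of_mem_erase hp
              refine ⟨?_, (h1 p hpP).2⟩
              have hne : φ₁ p ≠ m := by
                intro hc
                exact (Finset.ne_of_mem_erase hp) (inj1 hpP hxP hc)
              rcases Finset.mem_union.mp (h1 p hpP).1 with h | h
              · exact Finset.mem_union_left _ (Finset.mem_erase.mpr ⟨hne, h⟩)
              · exact Finset.mem_union_right _ h)
          (by intro m' hm'
              have hm'M := Finset.mem_of_mem_erase hm'
              refine ⟨?_, (h2 m' hm'M).2⟩
              have hne : φ₂ m' ≠ x := by
                have := hxsrc m' (Finset.mem_union_right _ hm'M)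
                rwa [hσM m' hm'M] at this
              rcases Finset.mem_union.mp (h2 m' hm'M).1 with h | h
              · exact Finset.mem_union_left _ (Finset.mem_erase.mpr ⟨hne, h⟩)
              · exact Finset.mem_union_right _ h)
          (fun p hp m' hm' => hRt p (Finset.mem_of_mem_erase hp) m'
            (Finset.mem_of_mem_erase hm'))
        obtain ⟨O⟩ := hrec
        refine ⟨O.extend x m (Finset.mem_union_left _ hxP)
          (Finset.mem_union_left _ hmM) (Or.inl hxP) (h1 x hxP).2
          (fun hc => Finset.disjoint_left.mp dPM (hc ▸ hxP) hmM) (Finset.erase_subset _ _)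
          (Finset.erase_subset _ _) le_rfl ?_ ?_ ?_ ?_ ?_ ?_⟩
        · intro hc
          rcases Finset.mem_union.mp hc with h | h
          · exact (Finset.mem_erase.mp h).1 rfl
          · exact Finset.disjoint_left.mp dPZ hxP h
        · intro hc
          rcases Finset.mem_union.mp hc with h | h
          · exact Finset.disjoint_left.mp dPM hxP (Finset.mem_of_mem_erase h)
          · exact Finset.disjoint_left.mp dPZ hxP h
        · intro hc
          rcases Finset.mem_union.mp hc with h | h
          · exact Finset.disjoint_left.mp dPM (Finset.mem_of_mem_erase h) hmM
          · exact Finset.disjoint_left.mp dMZ hmM h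
        · intro hc
          rcases Finset.mem_union.mp hc with h | h
          · exact (Finset.mem_erase.mp h).1 rfl
          · exact Finset.disjoint_left.mp dMZ hmM h
        · exact fun p hp hne => Finset.mem_erase.mpr ⟨hne, hp⟩
        · exact fun m' hm' hne => Finset.mem_erase.mpr ⟨hne, hm'⟩
      · -- x ∈ M, pair (φ₂ x, x) with φ₂ x ∈ P
        set p := φ₂ x with hp
        have hpPZ := (h2 x hxM).1
        have hpP : p ∈ P := by
          rw [hσM x hxM] at hxtgt
          rcases Finset.mem_union.mp hpPZ with h | h
          · exact h
          · exfalso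
            rcases Finset.mem_union.mp hxtgt with h' | h'
            · exact Finset.disjoint_left.mp dPZ h' h
            · exact Finset.disjoint_left.mp dMZ h' h
        have hrec := ih (P.erase p) (M.erase x) Z φ₁ φ₂
          (by have := Finset.card_erase_of_mem hpP
              have := Finset.card_erase_of_mem hxM
              have h5 : 1 ≤ P.card := Finset.card_pos.mpr ⟨p, hpP⟩
              have h6 : 1 ≤ M.card := Finset.card_pos.mpr ⟨x, hxM⟩
              omega)
          (Finset.disjoint_of_subset_left (Finset.erase_subset _ _)
            (Finset.disjoint_of_subset_right (Finset.erase_subset _ _) dPM))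
          (Finset.disjoint_of_subset_left (Finset.erase_subset _ _) dPZ)
          (Finset.disjoint_of_subset_left (Finset.erase_subset _ _) dMZ)
          (inj1.mono (Finset.coe_subset.mpr (Finset.erase_subset _ _)))
          (inj2.mono (Finset.coe_subset.mpr (Finset.erase_subset _ _)))
          (by intro p' hp'
              have hp'P := Finset.mem_of_mem_erase hp'
              refine ⟨?_, (h1 p' hp'P).2⟩
              have hne : φ₁ p' ≠ x := by
                have := hxsrc p' (Finset.mem_union_left _ hp'P)
                rwa [hσP p' hp'P] at this
              rcases Finset.mem_union.mp (h1 p' hp'P).1 with h | h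
              · exact Finset.mem_union_left _ (Finset.mem_erase.mpr ⟨hne, h⟩)
              · exact Finset.mem_union_right _ h)
          (by intro m' hm'
              have hm'M := Finset.mem_of_mem_erase hm'
              refine ⟨?_, (h2 m' hm'M).2⟩
              have hne : φ₂ m' ≠ p := by
                intro hc
                exact (Finset.ne_of_mem_erase hm') (inj2 hm'M hxM hc)
              rcases Finset.mem_union.mp (h2 m' hm'M).1 with h | h
              · exact Finset.mem_union_left _ (Finset.mem_erase.mpr ⟨hne, h⟩)
              · exact Finset.mem_union_right _ h)
          (fun p' hp' m' hm' => hRt p' (Finset.mem_of_mem_erase hp') m'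
            (Finset.mem_of_mem_erase hm'))
        obtain ⟨O⟩ := hrec
        refine ⟨O.extend p x (Finset.mem_union_left _ hpP)
          (Finset.mem_union_left _ hxM) (Or.inl hpP) (h2 x hxM).2
          (fun hc => Finset.disjoint_left.mp dPM (hc ▸ hpP) hxM) (Finset.erase_subset _ _)
          (Finset.erase_subset _ _) le_rfl ?_ ?_ ?_ ?_ ?_ ?_⟩
        · intro hc
          rcases Finset.mem_union.mp hc with h | h
          · exact (Finset.mem_erase.mp h).1 rfl
          · exact Finset.disjoint_left.mp dPZ hpP h
        · intro hc
          rcases Finset.mem_union.mp hc with h | h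
          · exact Finset.disjoint_left.mp dPM hpP (Finset.mem_of_mem_erase h)
          · exact Finset.disjoint_left.mp dPZ hpP h
        · intro hc
          rcases Finset.mem_union.mp hc with h | h
          · exact Finset.disjoint_left.mp dPM (Finset.mem_of_mem_erase h) hxM
          · exact Finset.disjoint_left.mp dMZ hxM h
        · intro hc
          rcases Finset.mem_union.mp hc with h | h
          · exact (Finset.mem_erase.mp h).1 rfl
          · exact Finset.disjoint_left.mp dMZ hxM h
        · exact fun p' hp' hne => Finset.mem_erase.mpr ⟨hne, hp'⟩
        · exact fun m' hm' hne => Finset.mem_erase.mpr ⟨hne, hm'⟩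
    · -- no source has a costly target
      by_cases hS : ∃ x ∈ P ∪ M, ∀ y ∈ P ∪ M, σ y ≠ x
      · obtain ⟨x, hxC, hxsrc⟩ := hS
        have hnc : σ x ∉ P ∪ M := fun hc => hI ⟨x, hxC, hxsrc, hc⟩
        have hxZ : σ x ∈ Z := by
          rcases Finset.mem_union.mp hxC with h | h
          · rw [hσP x h]
            rcases Finset.mem_union.mp (h1 x h).1 with h' | h'
            · exact absurd (Finset.mem_union_right P ((hσP x h) ▸ h')) hnc
            · exact h'
          · rw [hσM x h]
            rcases Finset.mem_union.mp (h2 x h).1 with h' | h'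
            · exact absurd (Finset.mem_union_left M ((hσM x h) ▸ h')) hnc
            · exact h'
        set z := σ x with hz
        by_cases hcont : ∃ y ∈ P ∪ M, y ≠ x ∧ σ y = z
        · obtain ⟨y, hyC, hyne, hyz⟩ := hcont
          by_cases hysrc : ∀ w ∈ P ∪ M, σ w ≠ y
          · -- case III : two sources sharing a zero; pair them directly
            have hopp : (x ∈ P ∧ y ∈ M) ∨ (x ∈ M ∧ y ∈ P) := by
              rcases Finset.mem_union.mp hxC with hx | hx <;>
                rcases Finset.mem_union.mp hyC with hy | hy
              · exfalso
                apply hyne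
                apply inj1 hy hx
                rw [← hσP y hy, ← hσP x hx, hyz]
              · exact Or.inl ⟨hx, hy⟩
              · exact Or.inr ⟨hx, hy⟩
              · exfalso
                apply hyne
                apply inj2 hy hx
                rw [← hσM y hy, ← hσM x hx, hyz]
            -- normalize : pp ∈ P, mm ∈ M, both sources, φ₁ pp = φ₂ mm = z
            obtain ⟨pp, mm, hppP, hmmM, hppsrc, hmmsrc, hppz, hmmz⟩ :
                ∃ pp mm, pp ∈ P ∧ mm ∈ M ∧ (∀ w ∈ P ∪ M, σ w ≠ pp) ∧
                  (∀ w ∈ P ∪ M, σ w ≠ mm) ∧ φ₁ pp = z ∧ φ₂ mm = z := by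
              rcases hopp with ⟨hxP, hyM⟩ | ⟨hxM, hyP⟩
              · exact ⟨x, y, hxP, hyM, hxsrc, hysrc, by rw [← hσP x hxP],
                  by rw [← hσM y hyM, hyz]⟩
              · exact ⟨y, x, hyP, hxM, hysrc, hxsrc, by rw [← hσP y hyP, hyz],
                  by rw [← hσM x hxM]⟩
            have hR : R pp mm := hRt pp hppP mm hmmM (by rw [hppz, hmmz])
              (by rw [hppz]; exact hxZ)
            have hrec := ih (P.erase pp) (M.erase mm) Z φ₁ φ₂
              (by have := Finset.card_erase_of_mem hppP
                  have := Finset.card_erase_of_mem hmmM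
                  have h5 : 1 ≤ P.card := Finset.card_pos.mpr ⟨pp, hppP⟩
                  have h6 : 1 ≤ M.card := Finset.card_pos.mpr ⟨mm, hmmM⟩
                  omega)
              (Finset.disjoint_of_subset_left (Finset.erase_subset _ _)
                (Finset.disjoint_of_subset_right (Finset.erase_subset _ _) dPM))
              (Finset.disjoint_of_subset_left (Finset.erase_subset _ _) dPZ)
              (Finset.disjoint_of_subset_left (Finset.erase_subset _ _) dMZ)
              (inj1.mono (Finset.coe_subset.mpr (Finset.erase_subset _ _)))
              (inj2.mono (Finset.coe_subset.mpr (Finset.erase_subset _ _)))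
              (by intro p' hp'
                  have hp'P := Finset.mem_of_mem_erase hp'
                  refine ⟨?_, (h1 p' hp'P).2⟩
                  have hne : φ₁ p' ≠ mm := by
                    have := hmmsrc p' (Finset.mem_union_left _ hp'P)
                    rwa [hσP p' hp'P] at this
                  rcases Finset.mem_union.mp (h1 p' hp'P).1 with h | h
                  · exact Finset.mem_union_left _ (Finset.mem_erase.mpr ⟨hne, h⟩)
                  · exact Finset.mem_union_right _ h)
              (by intro m' hm'
                  have hm'M := Finset.mem_of_mem_erase hm'
                  refine ⟨?_, (h2 m' hm'M).2⟩
                  have hne : φ₂ m' ≠ pp := by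
                    have := hppsrc m' (Finset.mem_union_right _ hm'M)
                    rwa [hσM m' hm'M] at this
                  rcases Finset.mem_union.mp (h2 m' hm'M).1 with h | h
                  · exact Finset.mem_union_left _ (Finset.mem_erase.mpr ⟨hne, h⟩)
                  · exact Finset.mem_union_right _ h)
              (fun p' hp' m' hm' => hRt p' (Finset.mem_of_mem_erase hp') m'
                (Finset.mem_of_mem_erase hm'))
            obtain ⟨O⟩ := hrec
            refine ⟨O.extend pp mm (Finset.mem_union_left _ hppP)
              (Finset.mem_union_left _ hmmM) (Or.inl hppP) hR
              (fun hc => Finset.disjoint_left.mp dPM (hc ▸ hppP) hmmM)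
              (Finset.erase_subset _ _) (Finset.erase_subset _ _) le_rfl ?_ ?_ ?_ ?_ ?_ ?_⟩
            · intro hc
              rcases Finset.mem_union.mp hc with h | h
              · exact (Finset.mem_erase.mp h).1 rfl
              · exact Finset.disjoint_left.mp dPZ hppP h
            · intro hc
              rcases Finset.mem_union.mp hc with h | h
              · exact Finset.disjoint_left.mp dPM hppP (Finset.mem_of_mem_erase h)
              · exact Finset.disjoint_left.mp dPZ hppP h
            · intro hc
              rcases Finset.mem_union.mp hc with h | h
              · exact Finset.disjoint_left.mp dPM (Finset.mem_of_mem_erase h) hmmM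
              · exact Finset.disjoint_left.mp dMZ hmmM h
            · intro hc
              rcases Finset.mem_union.mp hc with h | h
              · exact (Finset.mem_erase.mp h).1 rfl
              · exact Finset.disjoint_left.mp dMZ hmmM h
            · exact fun p' hp' hne => Finset.mem_erase.mpr ⟨hne, hp'⟩
            · exact fun m' hm' hne => Finset.mem_erase.mpr ⟨hne, hm'⟩
          · -- contradiction by counting : y is pointed but its pointer chain forces
            -- a source with a costly target
            exfalso
            push_neg at hysrc
            obtain ⟨w, hwC, hwy⟩ := hysrc
            set NS : Finset ℕ := (P ∪ M).filter (fun v => ∃ w' ∈ P ∪ M, σ w' = v)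
              with hNS
            set ν : ℕ → ℕ := fun v => if h : ∃ w' ∈ P ∪ M, σ w' = v then h.choose else 0
              with hν
            have hνspec : ∀ v ∈ NS, ν v ∈ P ∪ M ∧ σ (ν v) = v := by
              intro v hv
              have hex := (Finset.mem_filter.mp hv).2
              rw [hν]
              simp only [dif_pos hex]
              exact ⟨hex.choose_spec.1, hex.choose_spec.2⟩
            have hνNS : ∀ v ∈ NS, ν v ∈ NS := by
              intro v hv
              by_contra hns
              have hsrc' : ∀ w' ∈ P ∪ M, σ w' ≠ ν v := by
                intro w' hw' hc
                exact hns (Finset.mem_filter.mpr ⟨(hνspec v hv).1, w', hw', hc⟩)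
              refine hI ⟨ν v, (hνspec v hv).1, hsrc', ?_⟩
              rw [(hνspec v hv).2]
              exact Finset.mem_of_mem_filter v hv
            have hinj : Set.InjOn ν NS := by
              intro v hv v' hv' hvv
              have e1 := (hνspec v hv).2
              have e2 := (hνspec v' hv').2
              rw [← e1, ← e2, hvv]
            have himg : NS.image ν = NS := by
              apply Finset.eq_of_subset_of_card_le
              · intro v hv
                obtain ⟨w', hw', hww⟩ := Finset.mem_image.mp hv
                exact hww ▸ hνNS w' hw'
              · rw [Finset.card_image_of_injOn hinj]
            have hyNS : y ∈ NS := Finset.mem_filter.mpr ⟨hyC, w, hwC, hwy⟩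
            have : y ∈ NS.image ν := himg.symm ▸ hyNS
            obtain ⟨v, hv, hvy⟩ := Finset.mem_image.mp this
            have : σ y = v := by rw [← hvy]; exact (hνspec v hv).2
            rw [hyz] at this
            exact Finset.disjoint_left.mp dCZ (this ▸ Finset.mem_of_mem_filter v hv) hxZ
        · -- case II : uncontested zero target
          push_neg at hcont
          rcases Finset.mem_union.mp hxC with hxP | hxM
          · have hφz : φ₁ x = z := by rw [hz, hσP x hxP]
            have hrec := ih (P.erase x) M (Z.erase z) φ₁ φ₂
              (by have := Finset.card_erase_of_mem hxP
                  have h5 : 1 ≤ P.card := Finset.card_pos.mpr ⟨x, hxP⟩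
                  omega)
              (Finset.disjoint_of_subset_left (Finset.erase_subset _ _) dPM)
              (Finset.disjoint_of_subset_left (Finset.erase_subset _ _)
                (Finset.disjoint_of_subset_right (Finset.erase_subset _ _) dPZ))
              (Finset.disjoint_of_subset_right (Finset.erase_subset _ _) dMZ)
              (inj1.mono (Finset.coe_subset.mpr (Finset.erase_subset _ _))) inj2
              (by intro p' hp'
                  have hp'P := Finset.mem_of_mem_erase hp'
                  refine ⟨?_, (h1 p' hp'P).2⟩
                  have hne : φ₁ p' ≠ z := by
                    have := hcont p' (Finset.mem_union_left _ hp'P)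
                      (Finset.ne_of_mem_erase hp')
                    rwa [hσP p' hp'P] at this
                  rcases Finset.mem_union.mp (h1 p' hp'P).1 with h | h
                  · exact Finset.mem_union_left _ h
                  · exact Finset.mem_union_right _ (Finset.mem_erase.mpr ⟨hne, h⟩))
              (by intro m' hm'
                  refine ⟨?_, (h2 m' hm').2⟩
                  have hnex : φ₂ m' ≠ x := by
                    have := hxsrc m' (Finset.mem_union_right _ hm')
                    rwa [hσM m' hm'] at this
                  have hnez : φ₂ m' ≠ z := by
                    have hm'x : m' ≠ x := fun hc =>
                      Finset.disjoint_left.mp dPM hxP (hc ▸ hm')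
                    have := hcont m' (Finset.mem_union_right _ hm') hm'x
                    rwa [hσM m' hm'] at this
                  rcases Finset.mem_union.mp (h2 m' hm').1 with h | h
                  · exact Finset.mem_union_left _ (Finset.mem_erase.mpr ⟨hnex, h⟩)
                  · exact Finset.mem_union_right _ (Finset.mem_erase.mpr ⟨hnez, h⟩))
              (fun p' hp' m' hm' hee hz' => hRt p' (Finset.mem_of_mem_erase hp') m' hm'
                hee (Finset.mem_of_mem_erase hz'))
            obtain ⟨O⟩ := hrec
            refine ⟨O.extend x z (Finset.mem_union_left _ hxP)
              (Finset.mem_union_right _ hxZ) (Or.inl hxP) (hφz ▸ (h1 x hxP).2)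
              (fun hc => Finset.disjoint_left.mp dPZ (hc ▸ hxP) hxZ)
              (Finset.erase_subset _ _) le_rfl (Finset.erase_subset _ _) ?_ ?_ ?_ ?_ ?_ ?_⟩
            · intro hc
              rcases Finset.mem_union.mp hc with h | h
              · exact (Finset.mem_erase.mp h).1 rfl
              · exact Finset.disjoint_left.mp dPZ hxP (Finset.mem_of_mem_erase h)
            · intro hc
              rcases Finset.mem_union.mp hc with h | h
              · exact Finset.disjoint_left.mp dPM hxP h
              · exact Finset.disjoint_left.mp dPZ hxP (Finset.mem_of_mem_erase h)
            · intro hc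
              rcases Finset.mem_union.mp hc with h | h
              · exact Finset.disjoint_left.mp dPZ (Finset.mem_of_mem_erase h) hxZ
              · exact (Finset.mem_erase.mp h).1 rfl
            · intro hc
              rcases Finset.mem_union.mp hc with h | h
              · exact Finset.disjoint_left.mp dMZ h hxZ
              · exact (Finset.mem_erase.mp h).1 rfl
            · exact fun p' hp' hne => Finset.mem_erase.mpr ⟨hne, hp'⟩
            · exact fun m' hm' _ => hm'
          · have hφz : φ₂ x = z := by rw [hz, hσM x hxM]
            have hrec := ih P (M.erase x) (Z.erase z) φ₁ φ₂
              (by have := Finset.card_erase_of_mem hxM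
                  have h5 : 1 ≤ M.card := Finset.card_pos.mpr ⟨x, hxM⟩
                  omega)
              (Finset.disjoint_of_subset_right (Finset.erase_subset _ _) dPM)
              (Finset.disjoint_of_subset_right (Finset.erase_subset _ _) dPZ)
              (Finset.disjoint_of_subset_left (Finset.erase_subset _ _)
                (Finset.disjoint_of_subset_right (Finset.erase_subset _ _) dMZ))
              inj1 (inj2.mono (Finset.coe_subset.mpr (Finset.erase_subset _ _)))
              (by intro p' hp'
                  refine ⟨?_, (h1 p' hp').2⟩
                  have hnex : φ₁ p' ≠ x := by
                    have := hxsrc p' (Finset.mem_union_left _ hp')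
                    rwa [hσP p' hp'] at this
                  have hnez : φ₁ p' ≠ z := by
                    have hp'x : p' ≠ x := fun hc =>
                      Finset.disjoint_left.mp dPM (hc ▸ hp') hxM
                    have := hcont p' (Finset.mem_union_left _ hp') hp'x
                    rwa [hσP p' hp'] at this
                  rcases Finset.mem_union.mp (h1 p' hp').1 with h | h
                  · exact Finset.mem_union_left _ (Finset.mem_erase.mpr ⟨hnex, h⟩)
                  · exact Finset.mem_union_right _ (Finset.mem_erase.mpr ⟨hnez, h⟩))
              (by intro m' hm'
                  have hm'M := Finset.mem_of_mem_erase hm'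
                  refine ⟨?_, (h2 m' hm'M).2⟩
                  have hne : φ₂ m' ≠ z := by
                    have := hcont m' (Finset.mem_union_right _ hm'M)
                      (Finset.ne_of_mem_erase hm')
                    rwa [hσM m' hm'M] at this
                  rcases Finset.mem_union.mp (h2 m' hm'M).1 with h | h
                  · exact Finset.mem_union_left _ h
                  · exact Finset.mem_union_right _ (Finset.mem_erase.mpr ⟨hne, h⟩))
              (fun p' hp' m' hm' hee hz' => hRt p' hp' m' (Finset.mem_of_mem_erase hm')
                hee (Finset.mem_of_mem_erase hz'))
            obtain ⟨O⟩ := hrec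
            refine ⟨O.extend z x (Finset.mem_union_right _ hxZ)
              (Finset.mem_union_left _ hxM) (Or.inr hxM) (hφz ▸ (h2 x hxM).2)
              (fun hc => Finset.disjoint_left.mp dMZ hxM (hc ▸ hxZ)) le_rfl
              (Finset.erase_subset _ _) (Finset.erase_subset _ _) ?_ ?_ ?_ ?_ ?_ ?_⟩
            · intro hc
              rcases Finset.mem_union.mp hc with h | h
              · exact Finset.disjoint_left.mp dPZ h hxZ
              · exact (Finset.mem_erase.mp h).1 rfl
            · intro hc
              rcases Finset.mem_union.mp hc with h | h
              · exact Finset.disjoint_left.mp dMZ (Finset.mem_of_mem_erase h) hxZ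
              · exact (Finset.mem_erase.mp h).1 rfl
            · intro hc
              rcases Finset.mem_union.mp hc with h | h
              · exact Finset.disjoint_left.mp dPM h hxM
              · exact Finset.disjoint_left.mp dMZ hxM (Finset.mem_of_mem_erase h)
            · intro hc
              rcases Finset.mem_union.mp hc with h | h
              · exact (Finset.mem_erase.mp h).1 rfl
              · exact Finset.disjoint_left.mp dMZ hxM (Finset.mem_of_mem_erase h)
            · exact fun p' hp' _ => hp'
            · exact fun m' hm' hne => Finset.mem_erase.mpr ⟨hne, hm'⟩
      · -- case IV : no source at all; the φ₁-pairs work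
        push_neg at hS
        refine ⟨⟨P.image (fun pp => (pp, φ₁ pp)), ?_, ?_, ?_, ?_, ?_⟩⟩
        · intro e he
          obtain ⟨pp, hpp, hppe⟩ := Finset.mem_image.mp he
          rw [← hppe]
          exact ⟨Finset.mem_union_left _ hpp, (h1 pp hpp).1, Or.inl hpp, (h1 pp hpp).2⟩
        · intro e he e' he' hne
          obtain ⟨pp, hpp, hppe⟩ := Finset.mem_image.mp he
          obtain ⟨pp', hpp', hppe'⟩ := Finset.mem_image.mp he'
          rw [← hppe, ← hppe']
          rw [← hppe, ← hppe'] at hne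
          dsimp only
          have hppne : pp ≠ pp' := fun hc => hne (by rw [hc])
          refine ⟨hppne, fun hc => hppne (inj1 hpp hpp' hc), ?_, ?_⟩
          · intro hc
            rcases Finset.mem_union.mp (h1 pp' hpp').1 with h | h
            · exact Finset.disjoint_left.mp dPM hpp (hc ▸ h)
            · exact Finset.disjoint_left.mp dPZ hpp (hc ▸ h)
          · intro hc
            rcases Finset.mem_union.mp (h1 pp hpp).1 with h | h
            · exact Finset.disjoint_left.mp dPM hpp' (hc.symm ▸ h)
            · exact Finset.disjoint_left.mp dPZ hpp' (hc.symm ▸ h)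
        · intro e he
          obtain ⟨pp, hpp, hppe⟩ := Finset.mem_image.mp he
          rw [← hppe]
          dsimp only
          intro hc
          rcases Finset.mem_union.mp (h1 pp hpp).1 with h | h
          · exact Finset.disjoint_left.mp dPM hpp (hc ▸ h)
          · exact Finset.disjoint_left.mp dPZ hpp (hc ▸ h)
        · intro pp hpp
          exact ⟨(pp, φ₁ pp), Finset.mem_image_of_mem _ hpp, rfl⟩
        · intro m hm
          obtain ⟨y, hyC, hy⟩ := hS m (Finset.mem_union_right _ hm)
          have hyP : y ∈ P := by
            rcases Finset.mem_union.mp hyC with h | h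
            · exact h
            · exfalso
              rw [hσM y h] at hy
              rcases Finset.mem_union.mp (h2 y h).1 with h' | h'
              · exact Finset.disjoint_left.mp dPM (hy ▸ h') hm
              · exact Finset.disjoint_left.mp dMZ hm (hy ▸ h')
          refine ⟨(y, φ₁ y), Finset.mem_image_of_mem _ hyP, ?_⟩
          rw [← hσP y hyP]
          exact hy

end comb

section counting

variable {n : ℕ} {a b : ℝ} {u f : ℕ → ℝ}

lemma vs1_ge_dir (s t : ℕ) :
    f s - f t - MM u s t ≤ vs1 (fun t => -u t) u f (min s t) (max s t) := by
  rcases le_total s t with h | h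
  · rw [min_eq_left h, max_eq_right h, vs1, m1_eq, m1_eq]
    exact le_max_left _ _
  · rw [min_eq_right h, max_eq_left h, vs1, m1_eq, m1_eq]
    rw [MM_comm]
    exact le_max_right _ _

lemma mem_Vset_of' {i j : ℕ} (hi : i ∈ Finset.Icc 1 n) (hj : j ∈ Finset.Icc 1 n)
    (hij : i < j) (hv : 0 < vs1 (fun t => -u t) u f i j) : (i, j) ∈ Vset n u f :=
  Finset.mem_filter.mpr ⟨Finset.mem_product.mpr ⟨hi, hj⟩, hij, hv⟩

lemma MM_le_uM {uM : ℝ} (huMge : ∀ t : ℕ, 1 ≤ t → t + 1 ≤ n → u t ≤ uM)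
    {z i : ℕ} (hz : 1 ≤ z) (hzi : z ≤ i) (hin : i ≤ n) :
    MM u z i ≤ uM * ((i : ℝ) - (z : ℝ)) := by
  rw [MM_of_le u hzi]
  have h1 : ∑ t ∈ Finset.Ico z i, u t ≤ ∑ t ∈ Finset.Ico z i, uM := by
    refine Finset.sum_le_sum (fun t ht => ?_)
    rw [Finset.mem_Ico] at ht
    exact huMge t (le_trans hz ht.1) (by omega)
  have h2 : ∑ t ∈ Finset.Ico z i, uM = ((i - z : ℕ) : ℝ) * uM := by
    rw [Finset.sum_const, Nat.card_Ico, nsmul_eq_mul]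
  rw [h2] at h1
  have h3 : ((i - z : ℕ) : ℝ) = (i : ℝ) - (z : ℝ) := by
    push_cast [Nat.cast_sub hzi]
    ring
  rw [h3] at h1
  linarith

set_option maxHeartbeats 2000000 in
/-- Per-pair counting: a violated pair of score `w` forces `w/(2K)` violated
pairs sharing an endpoint with it. -/
lemma count_pairs (hn : 2 ≤ n) (hab : a < b)
    (hu : ∀ t : ℕ, 1 ≤ t → t + 1 ≤ n → 0 < u t)
    (hf : ∀ t : ℕ, 1 ≤ t → t ≤ n → a ≤ f t ∧ f t ≤ b)
    {uM : ℝ} (huMpos : 0 < uM)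
    (huMge : ∀ t : ℕ, 1 ≤ t → t + 1 ≤ n → u t ≤ uM)
    {x y : ℕ} (hx : x ∈ Finset.Icc 1 n) (hy : y ∈ Finset.Icc 1 n) (hxy : x ≠ y)
    (hw : 0 < f x - f y - MM u x y) :
    f x - f y - MM u x y ≤ 2 * (max uM ((b - a) / ((n:ℝ) - 1))) *
      (((Vset n u f).filter
        (fun v => v.1 = x ∨ v.2 = x ∨ v.1 = y ∨ v.2 = y)).card : ℝ) := by
  set w := f x - f y - MM u x y with hwdef
  set K := max uM ((b - a) / ((n:ℝ) - 1)) with hK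
  have hKuM : uM ≤ K := le_max_left _ _
  have hKpos : 0 < K := lt_of_lt_of_le huMpos hKuM
  have hnR : (0:ℝ) < (n:ℝ) - 1 := by
    have : (2:ℝ) ≤ (n:ℝ) := by exact_mod_cast hn
    linarith
  have hKr : (b - a) / ((n:ℝ) - 1) ≤ K := le_max_right _ _
  set i := min x y with hi
  set j := max x y with hj
  have hxm := Finset.mem_Icc.mp hx
  have hym := Finset.mem_Icc.mp hy
  have hij : i < j := min_lt_max.mpr hxy
  have hi1 : 1 ≤ i := le_min hxm.1 hym.1
  have hin : i ≤ n := le_trans (min_le_left _ _) hxm.2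
  have hj1 : 1 ≤ j := le_trans hxm.1 (le_max_left _ _)
  have hjn : j ≤ n := max_le hxm.2 hym.2
  have hiIcc : i ∈ Finset.Icc 1 n := Finset.mem_Icc.mpr ⟨hi1, hin⟩
  have hjIcc : j ∈ Finset.Icc 1 n := Finset.mem_Icc.mpr ⟨hj1, hjn⟩
  have hixy : i = x ∨ i = y := by
    rcases le_total x y with h | h
    · exact Or.inl (min_eq_left h)
    · exact Or.inr (min_eq_right h)
  have hjxy : j = x ∨ j = y := by
    rcases le_total x y with h | h
    · exact Or.inr (max_eq_right h)
    · exact Or.inl (max_eq_left h)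
  have hMxy : MM u x y = MM u i j := by
    rcases le_total x y with h | h
    · rw [hi, hj, min_eq_left h, max_eq_right h]
    · rw [hi, hj, min_eq_right h, max_eq_left h, MM_comm]
  -- decomposition of the two distances through i or j
  have hdecomp_between : ∀ z, i ≤ z → z ≤ j → MM u x z + MM u z y = MM u i j := by
    intro z h1 h2
    have hadd : MM u i j = MM u i z + MM u z j := MM_add u h1 h2
    rcases le_total x y with h | h
    · have hix : i = x := min_eq_left h
      have hjy : j = y := max_eq_right h
      rw [hix, hjy] at hadd ⊢
      linarith
    · have hiy : i = y := min_eq_right h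
      have hjx : j = x := max_eq_left h
      rw [hiy, hjx] at hadd ⊢
      rw [MM_comm u x z, MM_comm u z y]
      linarith
  have hdecomp_left : ∀ z, z ≤ i → MM u x z + MM u z y = 2 * MM u z i + MM u i j := by
    intro z h1
    have hadd : MM u z j = MM u z i + MM u i j := MM_add u h1 (le_of_lt hij)
    rcases le_total x y with h | h
    · have hix : i = x := min_eq_left h
      have hjy : j = y := max_eq_right h
      rw [hix, hjy] at hadd
      rw [hix, hjy, MM_comm u x z]
      linarith
    · have hiy : i = y := min_eq_right h
      have hjx : j = x := max_eq_left h
      rw [hiy, hjx] at hadd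
      rw [hiy, hjx, MM_comm u x z]
      linarith
  have hdecomp_right : ∀ z, j ≤ z → MM u x z + MM u z y = 2 * MM u j z + MM u i j := by
    intro z h1
    have hadd : MM u i z = MM u i j + MM u j z := MM_add u (le_of_lt hij) h1
    rcases le_total x y with h | h
    · have hix : i = x := min_eq_left h
      have hjy : j = y := max_eq_right h
      rw [hix, hjy] at hadd
      rw [hix, hjy, MM_comm u z y]
      linarith
    · have hiy : i = y := min_eq_right h
      have hjx : j = x := max_eq_left h
      rw [hiy, hjx] at hadd
      rw [hiy, hjx, MM_comm u z y]
      linarith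
  -- T, containing the pair (i,j)
  set T := (Vset n u f).filter (fun v => v.1 = x ∨ v.2 = x ∨ v.1 = y ∨ v.2 = y) with hT
  have hijT : (i, j) ∈ T := by
    refine Finset.mem_filter.mpr ⟨mem_Vset_of' hiIcc hjIcc hij ?_, ?_⟩
    · have h1 := vs1_ge_dir (u := u) (f := f) x y
      rw [← hi, ← hj] at h1
      linarith
    · rcases hixy with h | h
      · exact Or.inl h
      · exact Or.inr (Or.inr (Or.inl h))
  -- the threshold k
  set k : ℕ := ⌈w / (2 * uM)⌉₊ - 1 with hk
  have hcpos : 0 < ⌈w / (2 * uM)⌉₊ := Nat.ceil_pos.mpr (by positivity)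
  have hklt : (k : ℝ) * uM < w / 2 := by
    have h1 : (k : ℕ) < ⌈w / (2 * uM)⌉₊ := by omega
    have h2 : (k : ℝ) < w / (2 * uM) := Nat.lt_ceil.mp h1
    calc (k : ℝ) * uM < (w / (2 * uM)) * uM := by
          exact mul_lt_mul_of_pos_right h2 huMpos
      _ = w / 2 := by field_simp
  have hkge : w / 2 ≤ ((k : ℝ) + 1) * uM := by
    have h1 : ⌈w / (2 * uM)⌉₊ = k + 1 := by omega
    have h2 : w / (2 * uM) ≤ ((k : ℝ) + 1) := by
      have := Nat.le_ceil (w / (2 * uM))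
      rw [h1] at this
      push_cast at this
      linarith
    calc w / 2 = (w / (2 * uM)) * uM := by field_simp
      _ ≤ ((k : ℝ) + 1) * uM := mul_le_mul_of_nonneg_right h2 (le_of_lt huMpos)
  -- the good z's
  set Zb := Finset.Ioo i j with hZb
  set Zl := Finset.Ico (max 1 (i - k)) i with hZl
  set Zr := Finset.Ioc j (min n (j + k)) with hZr
  set ZU := Zb ∪ Zl ∪ Zr with hZU
  have hZUmem : ∀ z ∈ ZU, z ∈ Finset.Icc 1 n ∧ z ≠ x ∧ z ≠ y ∧
      0 < (f x - f z - MM u x z) + (f z - f y - MM u z y) := by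
    intro z hz
    have hzi : z ≠ x ∧ z ≠ y → True := fun _ => trivial
    rcases Finset.mem_union.mp hz with hz' | hz'
    · rcases Finset.mem_union.mp hz' with hzb | hzl
      · rw [hZb, Finset.mem_Ioo] at hzb
        have hzx : z ≠ x := by rcases hixy with h | h <;> rcases hjxy with h' | h' <;> omega
        have hzy : z ≠ y := by rcases hixy with h | h <;> rcases hjxy with h' | h' <;> omega
        refine ⟨Finset.mem_Icc.mpr ⟨by omega, by omega⟩, hzx, hzy, ?_⟩
        have := hdecomp_between z (le_of_lt hzb.1) (le_of_lt hzb.2)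
        have hww : f x - f y - MM u i j = w := by rw [hwdef, hMxy]
        linarith
      · rw [hZl, Finset.mem_Ico] at hzl
        have hz1 : 1 ≤ z := le_trans (le_max_left _ _) hzl.1
        have hzik : i - k ≤ z := le_trans (le_max_right _ _) hzl.1
        have hzx : z ≠ x := by rcases hixy with h | h <;> rcases hjxy with h' | h' <;> omega
        have hzy : z ≠ y := by rcases hixy with h | h <;> rcases hjxy with h' | h' <;> omega
        refine ⟨Finset.mem_Icc.mpr ⟨hz1, by omega⟩, hzx, hzy, ?_⟩
        have hdec := hdecomp_left z (le_of_lt hzl.2)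
        have hww : f x - f y - MM u i j = w := by rw [hwdef, hMxy]
        have hMle : MM u z i ≤ uM * ((i:ℝ) - (z:ℝ)) := MM_le_uM huMge hz1 (le_of_lt hzl.2) hin
        have hik : (i:ℝ) - (z:ℝ) ≤ (k:ℝ) := by
          have : i ≤ z + k := by omega
          have := (Nat.cast_le (α := ℝ)).mpr this
          push_cast at this
          linarith
        have hMk : MM u z i < w / 2 := by
          have huMk : uM * ((i:ℝ) - (z:ℝ)) ≤ (k:ℝ) * uM := by
            have hz0 : (0:ℝ) ≤ (i:ℝ) - (z:ℝ) := by
              have : z ≤ i := le_of_lt hzl.2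
              have := (Nat.cast_le (α := ℝ)).mpr this
              linarith
            nlinarith
          linarith
        linarith
    · rw [hZr, Finset.mem_Ioc] at hz'
      have hzn : z ≤ n := le_trans hz'.2 (min_le_left _ _)
      have hzjk : z ≤ j + k := le_trans hz'.2 (min_le_right _ _)
      have hzx : z ≠ x := by rcases hixy with h | h <;> rcases hjxy with h' | h' <;> omega
      have hzy : z ≠ y := by rcases hixy with h | h <;> rcases hjxy with h' | h' <;> omega
      refine ⟨Finset.mem_Icc.mpr ⟨by omega, hzn⟩, hzx, hzy, ?_⟩
      have hdec := hdecomp_right z (le_of_lt hz'.1)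
      have hww : f x - f y - MM u i j = w := by rw [hwdef, hMxy]
      have hMle : MM u j z ≤ uM * ((z:ℝ) - (j:ℝ)) := MM_le_uM huMge hj1 (le_of_lt hz'.1) hzn
      have hik : (z:ℝ) - (j:ℝ) ≤ (k:ℝ) := by
        have h5 : z ≤ j + k := hzjk
        have h6 := (Nat.cast_le (α := ℝ)).mpr h5
        push_cast at h6
        linarith
      have hMk : MM u j z < w / 2 := by
        have huMk : uM * ((z:ℝ) - (j:ℝ)) ≤ (k:ℝ) * uM := by
          have hz0 : (0:ℝ) ≤ (z:ℝ) - (j:ℝ) := by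
            have h5 : j ≤ z := le_of_lt hz'.1
            have h6 := (Nat.cast_le (α := ℝ)).mpr h5
            linarith
          nlinarith
        linarith
      linarith
  -- the injection into T
  set F : ℕ → ℕ × ℕ := fun z =>
    if 0 < vs1 (fun t => -u t) u f (min z x) (max z x) then (min z x, max z x)
    else (min z y, max z y) with hF
  have hFprop : ∀ z ∈ ZU, F z ∈ T ∧
      (((F z).1 = z ∧ ((F z).2 = x ∨ (F z).2 = y)) ∨
       ((F z).2 = z ∧ ((F z).1 = x ∨ (F z).1 = y))) := by
    intro z hz
    obtain ⟨hzIcc, hzx, hzy, hsum⟩ := hZUmem z hz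
    have hzm := Finset.mem_Icc.mp hzIcc
    by_cases hc : 0 < vs1 (fun t => -u t) u f (min z x) (max z x)
    · rw [hF]
      simp only [if_pos hc]
      have hminmax : min z x < max z x := min_lt_max.mpr hzx
      refine ⟨Finset.mem_filter.mpr ⟨mem_Vset_of'
        (Finset.mem_Icc.mpr ⟨le_min hzm.1 hxm.1, le_trans (min_le_left _ _) hzm.2⟩)
        (Finset.mem_Icc.mpr ⟨le_trans hzm.1 (le_max_left _ _), max_le hzm.2 hxm.2⟩)
        hminmax hc, ?_⟩, ?_⟩
      · rcases le_total z x with h | h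
        · exact Or.inr (Or.inl (max_eq_right h))
        · exact Or.inl (min_eq_right h)
      · rcases le_total z x with h | h
        · exact Or.inl ⟨min_eq_left h, Or.inl (max_eq_right h)⟩
        · exact Or.inr ⟨max_eq_left h, Or.inl (min_eq_right h)⟩
    · rw [hF]
      simp only [if_neg hc]
      have hnx : ¬ (0 < f x - f z - MM u x z) := by
        intro hcc
        apply hc
        have h1 := vs1_ge_dir (u := u) (f := f) x z
        rw [min_comm x z, max_comm x z] at h1
        linarith
      have hzy' : 0 < f z - f y - MM u z y := by linarith
      have hvs : 0 < vs1 (fun t => -u t) u f (min z y) (max z y) :=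
        lt_of_lt_of_le hzy' (vs1_ge_dir z y)
      have hminmax : min z y < max z y := min_lt_max.mpr hzy
      refine ⟨Finset.mem_filter.mpr ⟨mem_Vset_of'
        (Finset.mem_Icc.mpr ⟨le_min hzm.1 hym.1, le_trans (min_le_left _ _) hzm.2⟩)
        (Finset.mem_Icc.mpr ⟨le_trans hzm.1 (le_max_left _ _), max_le hzm.2 hym.2⟩)
        hminmax hvs, ?_⟩, ?_⟩
      · rcases le_total z y with h | h
        · exact Or.inr (Or.inr (Or.inr (max_eq_right h)))
        · exact Or.inr (Or.inr (Or.inl (min_eq_right h)))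
      · rcases le_total z y with h | h
        · exact Or.inl ⟨min_eq_left h, Or.inr (max_eq_right h)⟩
        · exact Or.inr ⟨max_eq_left h, Or.inr (min_eq_right h)⟩
  set F' : ℕ → ℕ × ℕ := fun z => if z = 0 then (i, j) else F z with hF'
  have hZU0 : (0 : ℕ) ∉ ZU := by
    intro hc
    have := (hZUmem 0 hc).1
    rw [Finset.mem_Icc] at this
    omega
  have hcardle : (insert 0 ZU).card ≤ T.card := by
    apply Finset.card_le_card_of_injOn F'
    · intro z hz
      rcases Finset.mem_insert.mp hz with rfl | hz'
      · rw [hF']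
        simp only [if_pos rfl]
        exact hijT
      · rw [hF']
        have hzne : z ≠ 0 := by
          intro hc
          exact hZU0 (hc ▸ hz')
        simp only [if_neg hzne]
        exact (hFprop z hz').1
    · intro z hz z' hz' heq
      rcases Finset.mem_insert.mp hz with rfl | hz2
      · rcases Finset.mem_insert.mp hz' with h | hz2'
        · exact h.symm
        · exfalso
          have hz'ne : z' ≠ 0 := fun hc => hZU0 (hc ▸ hz2')
          rw [hF'] at heq
          simp only [if_pos rfl, if_neg hz'ne] at heq
          obtain ⟨hzIcc, hzx, hzy, _⟩ := hZUmem z' hz2'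
          rcases (hFprop z' hz2').2 with ⟨h1, h2⟩ | ⟨h1, h2⟩
          · rw [← heq] at h1
            have h1b : i = z' := h1
            rcases hixy with h | h
            · exact hzx (by rw [← h1b, h])
            · exact hzy (by rw [← h1b, h])
          · rw [← heq] at h1
            have h1b : j = z' := h1
            rcases hjxy with h | h
            · exact hzx (by rw [← h1b, h])
            · exact hzy (by rw [← h1b, h])
      · rcases Finset.mem_insert.mp hz' with rfl | hz2'
        · exfalso
          have hzne : z ≠ 0 := fun hc => hZU0 (hc ▸ hz2)
          rw [hF'] at heq
          simp only [if_pos rfl, if_neg hzne] at heq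
          obtain ⟨hzIcc, hzx, hzy, _⟩ := hZUmem z hz2
          rcases (hFprop z hz2).2 with ⟨h1, h2⟩ | ⟨h1, h2⟩
          · rw [heq] at h1
            have h1b : i = z := h1
            rcases hixy with h | h
            · exact hzx (by rw [← h1b, h])
            · exact hzy (by rw [← h1b, h])
          · rw [heq] at h1
            have h1b : j = z := h1
            rcases hjxy with h | h
            · exact hzx (by rw [← h1b, h])
            · exact hzy (by rw [← h1b, h])
        · have hzne : z ≠ 0 := fun hc => hZU0 (hc ▸ hz2)
          have hz'ne : z' ≠ 0 := fun hc => hZU0 (hc ▸ hz2')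
          rw [hF'] at heq
          simp only [if_neg hzne, if_neg hz'ne] at heq
          obtain ⟨_, hzx, hzy, _⟩ := hZUmem z hz2
          obtain ⟨_, hz'x, hz'y, _⟩ := hZUmem z' hz2'
          rcases (hFprop z hz2).2 with ⟨h1, h2⟩ | ⟨h1, h2⟩ <;>
            rcases (hFprop z' hz2').2 with ⟨h1', h2'⟩ | ⟨h1', h2'⟩
          · rw [← h1, ← h1', heq]
          · exfalso
            have : (F z).2 = z' := by rw [heq]; exact h1'
            rcases h2 with h | h
            · exact hz'x (by rw [← this, h])
            · exact hz'y (by rw [← this, h])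
          · exfalso
            have : (F z).1 = z' := by rw [heq]; exact h1'
            rcases h2 with h | h
            · exact hz'x (by rw [← this, h])
            · exact hz'y (by rw [← this, h])
          · rw [← h1, ← h1', heq]
  -- cardinalities
  have hZUcard : ZU.card = Zb.card + Zl.card + Zr.card := by
    rw [hZU]
    rw [Finset.card_union_of_disjoint, Finset.card_union_of_disjoint]
    · rw [hZb, hZl]
      rw [Finset.disjoint_left]
      intro z hz hz'
      rw [Finset.mem_Ioo] at hz
      rw [Finset.mem_Ico] at hz'
      omega
    · rw [Finset.disjoint_left]
      intro z hz hz'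
      rw [hZr, Finset.mem_Ioc] at hz'
      rcases Finset.mem_union.mp hz with h | h
      · rw [hZb, Finset.mem_Ioo] at h
        omega
      · rw [hZl, Finset.mem_Ico] at h
        omega
  have hZbcard : Zb.card = j - i - 1 := by rw [hZb, Nat.card_Ioo]
  have hZlcard : Zl.card = i - max 1 (i - k) := by rw [hZl, Nat.card_Ico]
  have hZrcard : Zr.card = min n (j + k) - j := by rw [hZr, Nat.card_Ioc]
  have hTcard : j - i - 1 + (i - max 1 (i - k)) + (min n (j + k) - j) + 1 ≤ T.card := by
    have h1 : (insert 0 ZU).card = ZU.card + 1 := Finset.card_insert_of_notMem hZU0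
    omega
  -- final case analysis
  by_cases hcase : k ≤ i - 1 ∨ k ≤ n - j
  · have hkbound : k + 1 ≤ T.card := by
      rcases hcase with h | h
      · have : i - max 1 (i - k) = k := by omega
        omega
      · have : min n (j + k) - j = k := by omega
        omega
    have hkR : ((k : ℝ) + 1) ≤ (T.card : ℝ) := by
      have := (Nat.cast_le (α := ℝ)).mpr hkbound
      push_cast at this
      linarith
    calc w ≤ 2 * (((k:ℝ) + 1) * uM) := by linarith
      _ ≤ 2 * ((T.card : ℝ) * uM) := by nlinarith
      _ ≤ 2 * K * (T.card : ℝ) := by nlinarith [Nat.cast_nonneg (α := ℝ) T.card]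
  · push_neg at hcase
    have htot : n - 1 ≤ T.card := by
      have h1 : i - max 1 (i - k) = i - 1 := by omega
      have h2 : min n (j + k) - j = n - j := by omega
      omega
    have hnT : ((n : ℝ) - 1) ≤ (T.card : ℝ) := by
      have h2 := (Nat.cast_le (α := ℝ)).mpr htot
      rw [Nat.cast_sub (by omega : 1 ≤ n)] at h2
      simpa using h2
    have hwr : w ≤ b - a := by
      have h1 := (hf x hxm.1 hxm.2).2
      have h2 := (hf y hym.1 hym.2).1
      have h3 : 0 ≤ MM u x y := MM_nonneg hu hxm.1 hxm.2 hym.1 hym.2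
      rw [hwdef]
      linarith
    have hrK : b - a ≤ K * ((n:ℝ) - 1) := by
      have := hKr
      rw [div_le_iff₀ hnR] at this
      linarith
    calc w ≤ b - a := hwr
      _ ≤ K * ((n:ℝ) - 1) := hrK
      _ ≤ 2 * K * (T.card : ℝ) := by nlinarith

end counting

section outer

variable {n : ℕ} {a b : ℝ} {u f : ℕ → ℝ}

lemma MM_triangle (hu : ∀ t : ℕ, 1 ≤ t → t + 1 ≤ n → 0 < u t)
    {p z m : ℕ} (hp : p ∈ Finset.Icc 1 n) (hz : z ∈ Finset.Icc 1 n)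
    (hm : m ∈ Finset.Icc 1 n) : MM u p m ≤ MM u p z + MM u z m := by
  have hpm := Finset.mem_Icc.mp hp
  have hzm := Finset.mem_Icc.mp hz
  have hmm := Finset.mem_Icc.mp hm
  have hnn : ∀ s t : ℕ, s ∈ Finset.Icc 1 n → t ∈ Finset.Icc 1 n → 0 ≤ MM u s t := by
    intro s t hs ht
    have hs' := Finset.mem_Icc.mp hs
    have ht' := Finset.mem_Icc.mp ht
    exact MM_nonneg hu hs'.1 hs'.2 ht'.1 ht'.2
  rcases le_total p m with hpm' | hpm'
  · rcases le_total z p with h1 | h1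
    · have hadd : MM u z m = MM u z p + MM u p m := MM_add u h1 hpm'
      have := hnn z p hz hp
      rw [MM_comm u p z]
      linarith
    · rcases le_total z m with h2 | h2
      · rw [MM_add u h1 h2]
      · have hadd : MM u p z = MM u p m + MM u m z := MM_add u hpm' h2
        have := hnn m z hm hz
        rw [MM_comm u z m]
        linarith
  · rcases le_total z m with h1 | h1
    · have hadd : MM u z p = MM u z m + MM u m p := MM_add u h1 hpm'
      have := hnn z m hz hm
      rw [MM_comm u p z, MM_comm u p m]
      linarith
    · rcases le_total z p with h2 | h2
      · have hadd : MM u m p = MM u m z + MM u z p := MM_add u h1 h2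
        rw [MM_comm u p m, MM_comm u p z, MM_comm u z m]
        linarith
      · have hadd : MM u m z = MM u m p + MM u p z := MM_add u hpm' h2
        have := hnn p z hp hz
        rw [MM_comm u p m, MM_comm u z m]
        linarith

lemma abs_eq_pos_add_neg (c : ℝ) : |c| = max c 0 + max (-c) 0 := by
  rcases le_total c 0 with h | h
  · rw [abs_of_nonpos h, max_eq_right h, max_eq_left (by linarith)]
    ring
  · rw [abs_of_nonneg h, max_eq_left h, max_eq_right (by linarith)]
    ring

set_option maxHeartbeats 2000000 in
lemma main_bound (hn : 2 ≤ n) (hab : a < b)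
    (hu : ∀ t : ℕ, 1 ≤ t → t + 1 ≤ n → 0 < u t)
    (hf : ∀ t : ℕ, 1 ≤ t → t ≤ n → a ≤ f t ∧ f t ≤ b)
    (uM : ℝ) (huMpos : 0 < uM)
    (huMge : ∀ t : ℕ, 1 ≤ t → t + 1 ≤ n → u t ≤ uM) :
    ∃ h : ℕ → ℝ, Pf n u h ∧
      cost n f h ≤ 4 * (max uM ((b - a) / ((n:ℝ) - 1))) * ((Vset n u f).card : ℝ) := by
  obtain ⟨hstar, hPstar, hbound, hopt⟩ := exists_opt (le_of_lt hab) hu hf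
  set K := max uM ((b - a) / ((n:ℝ) - 1)) with hK
  have hKpos : 0 < K := lt_of_lt_of_le huMpos (le_max_left _ _)
  refine ⟨hstar, hPstar, ?_⟩
  set P := (Finset.Icc 1 n).filter (fun t => hstar t < f t) with hP
  set M := (Finset.Icc 1 n).filter (fun t => f t < hstar t) with hM
  set Z := (Finset.Icc 1 n).filter (fun t => f t = hstar t) with hZ
  have dPM : Disjoint P M := by
    rw [Finset.disjoint_left]
    intro t ht ht'
    rw [hP, Finset.mem_filter] at ht
    rw [hM, Finset.mem_filter] at ht'
    linarith [ht.2, ht'.2]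
  have dPZ : Disjoint P Z := by
    rw [Finset.disjoint_left]
    intro t ht ht'
    rw [hP, Finset.mem_filter] at ht
    rw [hZ, Finset.mem_filter] at ht'
    linarith [ht.2, le_of_eq ht'.2]
  have dMZ : Disjoint M Z := by
    rw [Finset.disjoint_left]
    intro t ht ht'
    rw [hM, Finset.mem_filter] at ht
    rw [hZ, Finset.mem_filter] at ht'
    linarith [ht.2, le_of_eq ht'.2]
  obtain ⟨φ₁, hφ₁inj, hφ₁mem⟩ := exists_phi_plus (g := f) hu hPstar hopt
  obtain ⟨φ₂, hφ₂inj, hφ₂mem⟩ := exists_phi_minus (g := f) hu hPstar hopt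
  set R : ℕ → ℕ → Prop := fun p q => p ∈ Finset.Icc 1 n ∧ q ∈ Finset.Icc 1 n ∧
    MM u p q ≤ hstar p - hstar q with hR
  have hMZ_eq : ∀ q, q ∈ (Finset.Icc 1 n).filter (fun t => f t ≤ hstar t) → q ∈ M ∪ Z := by
    intro q hq
    rw [Finset.mem_filter] at hq
    rcases lt_or_eq_of_le hq.2 with h | h
    · exact Finset.mem_union_left _ (Finset.mem_filter.mpr ⟨hq.1, h⟩)
    · exact Finset.mem_union_right _ (Finset.mem_filter.mpr ⟨hq.1, h⟩)
  have hPZ_eq : ∀ q, q ∈ (Finset.Icc 1 n).filter (fun t => hstar t ≤ f t) → q ∈ P ∪ Z := by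
    intro q hq
    rw [Finset.mem_filter] at hq
    rcases lt_or_eq_of_le hq.2 with h | h
    · exact Finset.mem_union_left _ (Finset.mem_filter.mpr ⟨hq.1, h⟩)
    · exact Finset.mem_union_right _ (Finset.mem_filter.mpr ⟨hq.1, h.symm⟩)
  have hIccP : ∀ t ∈ P, t ∈ Finset.Icc 1 n := fun t ht => Finset.mem_of_mem_filter t ht
  have hIccM : ∀ t ∈ M, t ∈ Finset.Icc 1 n := fun t ht => Finset.mem_of_mem_filter t ht
  have hIccZ : ∀ t ∈ Z, t ∈ Finset.Icc 1 n := fun t ht => Finset.mem_of_mem_filter t ht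
  have hcomb := comb R (P.card + M.card) P M Z φ₁ φ₂ le_rfl dPM dPZ dMZ hφ₁inj hφ₂inj
    (by intro p hp
        obtain ⟨hmem, hMMle⟩ := hφ₁mem p hp
        have hqIcc := Finset.mem_of_mem_filter _ hmem
        exact ⟨hMZ_eq _ hmem, hIccP p hp, hqIcc, hMMle⟩)
    (by intro m hm
        obtain ⟨hmem, hMMle⟩ := hφ₂mem m hm
        have hqIcc := Finset.mem_of_mem_filter _ hmem
        exact ⟨hPZ_eq _ hmem, hqIcc, hIccM m hm, hMMle⟩)
    (by intro p hp m hm heq hz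
        obtain ⟨hmem1, hMM1⟩ := hφ₁mem p hp
        obtain ⟨hmem2, hMM2⟩ := hφ₂mem m hm
        have hzIcc := hIccZ _ hz
        refine ⟨hIccP p hp, hIccM m hm, ?_⟩
        have htri := MM_triangle hu (hIccP p hp) hzIcc (hIccM m hm)
        rw [heq] at hMM1
        have : MM u (φ₂ m) m ≤ hstar (φ₂ m) - hstar m := hMM2
        calc MM u p m ≤ MM u p (φ₂ m) + MM u (φ₂ m) m := by
              rw [← heq] at *
              exact MM_triangle hu (hIccP p hp) (heq ▸ hzIcc) (hIccM m hm)
          _ ≤ (hstar p - hstar (φ₂ m)) + (hstar (φ₂ m) - hstar m) := by linarith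
          _ = hstar p - hstar m := by ring)
  obtain ⟨O⟩ := hcomb
  -- injectivity of the projections on the matching
  have hfstinj : Set.InjOn Prod.fst (O.pairs : Set (ℕ × ℕ)) := by
    intro e he e' he' heq
    by_contra hne
    exact (O.disj e he e' he' hne).1 heq
  have hsndinj : Set.InjOn Prod.snd (O.pairs : Set (ℕ × ℕ)) := by
    intro e he e' he' heq
    by_contra hne
    exact (O.disj e he e' he' hne).2.1 heq
  -- accounting : cost ≤ sum of pair scores
  set cpos : ℕ → ℝ := fun t => max (f t - hstar t) 0 with hcpos
  set cneg : ℕ → ℝ := fun t => max (hstar t - f t) 0 with hcneg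
  have hcost_split : cost n f hstar = (∑ t ∈ P, cpos t) + (∑ t ∈ M, cneg t) := by
    have h1 : cost n f hstar = ∑ t ∈ Finset.Icc 1 n, (cpos t + cneg t) := by
      refine Finset.sum_congr rfl (fun t _ => ?_)
      rw [hcpos, hcneg]
      have := abs_eq_pos_add_neg (f t - hstar t)
      simp only [neg_sub] at this
      exact this
    rw [h1, Finset.sum_add_distrib]
    congr 1
    · refine (Finset.sum_subset (Finset.filter_subset _ _) ?_).symm
      intro t htIcc htP
      rw [Finset.mem_filter] at htP
      push_neg at htP
      have : f t - hstar t ≤ 0 := by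
        have := htP htIcc
        linarith
      exact max_eq_right this
    · refine (Finset.sum_subset (Finset.filter_subset _ _) ?_).symm
      intro t htIcc htM
      rw [Finset.mem_filter] at htM
      push_neg at htM
      have : hstar t - f t ≤ 0 := by
        have := htM htIcc
        linarith
      exact max_eq_right this
  have hsum1 : (∑ t ∈ P, cpos t) ≤ ∑ e ∈ O.pairs, cpos e.1 := by
    rw [Finset.sum_image hfstinj |>.symm]
    · refine Finset.sum_le_sum_of_subset_of_nonneg ?_ (fun t _ _ => le_max_right _ _)
      intro p hp
      obtain ⟨e, he, hee⟩ := O.covP p hp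
      exact Finset.mem_image.mpr ⟨e, he, hee⟩
  have hsum2 : (∑ t ∈ M, cneg t) ≤ ∑ e ∈ O.pairs, cneg e.2 := by
    rw [Finset.sum_image hsndinj |>.symm]
    · refine Finset.sum_le_sum_of_subset_of_nonneg ?_ (fun t _ _ => le_max_right _ _)
      intro m hm
      obtain ⟨e, he, hee⟩ := O.covM m hm
      exact Finset.mem_image.mpr ⟨e, he, hee⟩
  have hpair_ge : ∀ e ∈ O.pairs, cpos e.1 + cneg e.2 ≤ f e.1 - f e.2 - MM u e.1 e.2 := by
    intro e he
    obtain ⟨h1, h2, h3, hRIcc1, hRIcc2, hMMle⟩ := O.good e he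
    have hc1 : cpos e.1 = f e.1 - hstar e.1 := by
      rw [hcpos]
      apply max_eq_left
      rcases Finset.mem_union.mp h1 with h | h
      · rw [hP, Finset.mem_filter] at h
        linarith [h.2]
      · rw [hZ, Finset.mem_filter] at h
        linarith [le_of_eq h.2]
    have hc2 : cneg e.2 = hstar e.2 - f e.2 := by
      rw [hcneg]
      apply max_eq_left
      rcases Finset.mem_union.mp h2 with h | h
      · rw [hM, Finset.mem_filter] at h
        linarith [h.2]
      · rw [hZ, Finset.mem_filter] at h
        linarith [le_of_eq h.2]
    rw [hc1, hc2]
    linarith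
  have hpair_pos : ∀ e ∈ O.pairs, 0 < f e.1 - f e.2 - MM u e.1 e.2 := by
    intro e he
    obtain ⟨h1, h2, h3, hRIcc1, hRIcc2, hMMle⟩ := O.good e he
    have := hpair_ge e he
    rcases h3 with h | h
    · rw [hP, Finset.mem_filter] at h
      have hcp : 0 < cpos e.1 := by
        rw [hcpos]
        rw [lt_max_iff]
        left
        linarith [h.2]
      have hcn : 0 ≤ cneg e.2 := le_max_right _ _
      linarith
    · rw [hM, Finset.mem_filter] at h
      have hcn : 0 < cneg e.2 := by
        rw [hcneg]
        rw [lt_max_iff]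
        left
        linarith [h.2]
      have hcp : 0 ≤ cpos e.1 := le_max_right _ _
      linarith
  -- per-pair counting
  set Tcard : ℕ × ℕ → ℕ := fun e =>
    ((Vset n u f).filter
      (fun v => v.1 = e.1 ∨ v.2 = e.1 ∨ v.1 = e.2 ∨ v.2 = e.2)).card with hTcard
  have hperpair : ∀ e ∈ O.pairs,
      f e.1 - f e.2 - MM u e.1 e.2 ≤ 2 * K * (Tcard e : ℝ) := by
    intro e he
    obtain ⟨h1, h2, h3, hRIcc1, hRIcc2, hMMle⟩ := O.good e he
    exact count_pairs hn hab hu hf huMpos huMge hRIcc1 hRIcc2 (O.nee e he)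
      (hpair_pos e he)
  -- multiplicity
  have hmult : ∑ e ∈ O.pairs, Tcard e ≤ 2 * (Vset n u f).card := by
    have hone : ∀ ww, (O.pairs.filter (fun e => e.1 = ww ∨ e.2 = ww)).card ≤ 1 := by
      intro ww
      rw [Finset.card_le_one]
      intro e he e' he'
      rw [Finset.mem_filter] at he he'
      by_contra hne
      obtain ⟨k1, k2, k3, k4⟩ := O.disj e he.1 e' he'.1 hne
      rcases he.2 with h | h <;> rcases he'.2 with h' | h'
      · exact k1 (h.trans h'.symm)
      · exact k3 (h.trans h'.symm)
      · exact k4 (h.trans h'.symm)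
      · exact k2 (h.trans h'.symm)
    have hswap : ∑ e ∈ O.pairs, Tcard e =
        ∑ v ∈ Vset n u f, (O.pairs.filter
          (fun e => v.1 = e.1 ∨ v.2 = e.1 ∨ v.1 = e.2 ∨ v.2 = e.2)).card := by
      rw [hTcard]
      simp only [Finset.card_filter]
      rw [Finset.sum_comm]
    rw [hswap]
    have hbnd : ∀ v ∈ Vset n u f, (O.pairs.filter
        (fun e => v.1 = e.1 ∨ v.2 = e.1 ∨ v.1 = e.2 ∨ v.2 = e.2)).card ≤ 2 := by
      intro v _
      have hsub : (O.pairs.filter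
          (fun e => v.1 = e.1 ∨ v.2 = e.1 ∨ v.1 = e.2 ∨ v.2 = e.2)) ⊆
          (O.pairs.filter (fun e => e.1 = v.1 ∨ e.2 = v.1)) ∪
          (O.pairs.filter (fun e => e.1 = v.2 ∨ e.2 = v.2)) := by
        intro e he
        rw [Finset.mem_filter] at he
        rcases he.2 with h | h | h | h
        · exact Finset.mem_union_left _ (Finset.mem_filter.mpr ⟨he.1, Or.inl h.symm⟩)
        · exact Finset.mem_union_right _ (Finset.mem_filter.mpr ⟨he.1, Or.inl h.symm⟩)
        · exact Finset.mem_union_left _ (Finset.mem_filter.mpr ⟨he.1, Or.inr h.symm⟩)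
        · exact Finset.mem_union_right _ (Finset.mem_filter.mpr ⟨he.1, Or.inr h.symm⟩)
      calc _ ≤ _ := Finset.card_le_card hsub
        _ ≤ _ := Finset.card_union_le _ _
        _ ≤ 2 := by
          have := hone v.1
          have := hone v.2
          omega
    calc ∑ v ∈ Vset n u f, _ ≤ ∑ v ∈ Vset n u f, 2 := Finset.sum_le_sum hbnd
      _ = 2 * (Vset n u f).card := by rw [Finset.sum_const]; ring
  -- put everything together
  have hchain : cost n f hstar ≤ 2 * K * ((∑ e ∈ O.pairs, Tcard e : ℕ) : ℝ) := by
    have h1 : cost n f hstar ≤ ∑ e ∈ O.pairs, (f e.1 - f e.2 - MM u e.1 e.2) := by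
      rw [hcost_split]
      calc (∑ t ∈ P, cpos t) + (∑ t ∈ M, cneg t)
          ≤ (∑ e ∈ O.pairs, cpos e.1) + (∑ e ∈ O.pairs, cneg e.2) := by
            exact add_le_add hsum1 hsum2
        _ = ∑ e ∈ O.pairs, (cpos e.1 + cneg e.2) := by rw [Finset.sum_add_distrib]
        _ ≤ _ := Finset.sum_le_sum hpair_ge
    have h2 : ∑ e ∈ O.pairs, (f e.1 - f e.2 - MM u e.1 e.2) ≤
        ∑ e ∈ O.pairs, 2 * K * (Tcard e : ℝ) := Finset.sum_le_sum hperpair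
    have h3 : ∑ e ∈ O.pairs, 2 * K * (Tcard e : ℝ) =
        2 * K * ((∑ e ∈ O.pairs, Tcard e : ℕ) : ℝ) := by
      rw [← Finset.mul_sum]
      congr 1
      exact_mod_cast (Nat.cast_sum _ _).symm
    linarith
  have hfin : ((∑ e ∈ O.pairs, Tcard e : ℕ) : ℝ) ≤ 2 * ((Vset n u f).card : ℝ) := by
    exact_mod_cast hmult
  calc cost n f hstar ≤ 2 * K * ((∑ e ∈ O.pairs, Tcard e : ℕ) : ℝ) := hchain
    _ ≤ 2 * K * (2 * ((Vset n u f).card : ℝ)) := by nlinarith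
    _ = 4 * K * ((Vset n u f).card : ℝ) := by ring

end outer

end S19

/-- for `f : [n] → [a,b]` with `r = b − a > 0`, bounds `l = −u`
(`u > 0`), and `u_M = max_t u(t)`, the number of violated unordered pairs of `f`
is at least `(L1(f,P)/4) · min{1/u_M, (n−1)/r}`. -/
theorem stmt19 (n : ℕ) (hn : 2 ≤ n) (a b : ℝ) (hab : a < b)
    (u : ℕ → ℝ) (hu : ∀ t : ℕ, 1 ≤ t → t + 1 ≤ n → 0 < u t)
    (f : ℕ → ℝ) (hf : ∀ t : ℕ, 1 ≤ t → t ≤ n → a ≤ f t ∧ f t ≤ b)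
    (uM : ℝ)
    (huM : uM = (Finset.Icc 1 (n - 1)).sup'
      (Finset.nonempty_Icc.mpr (by omega)) u) :
    (sInf {s : ℝ | ∃ h : ℕ → ℝ,
        (∀ t : ℕ, 1 ≤ t → t + 1 ≤ n →
          -u t ≤ h (t + 1) - h t ∧ h (t + 1) - h t ≤ u t) ∧
        s = ∑ t ∈ Finset.Icc 1 n, |f t - h t|} / 4)
      * min (1 / uM) (((n : ℝ) - 1) / (b - a))
      ≤ ((((Finset.Icc 1 n) ×ˢ (Finset.Icc 1 n)).filter
          (fun p : ℕ × ℕ => p.1 < p.2 ∧ 0 < vs1 (fun t => -u t) u f p.1 p.2)).card : ℝ) := by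
  have hn1 : (1:ℕ) ≤ n - 1 := by omega
  have huMge : ∀ t : ℕ, 1 ≤ t → t + 1 ≤ n → u t ≤ uM := by
    intro t h1 h2
    rw [huM]
    exact Finset.le_sup' u (Finset.mem_Icc.mpr ⟨h1, by omega⟩)
  have huMpos : 0 < uM := by
    have h1 : u 1 ≤ uM := huMge 1 le_rfl (by omega)
    have h2 : 0 < u 1 := hu 1 le_rfl (by omega)
    linarith
  obtain ⟨h, hP, hc⟩ := S19.main_bound hn hab hu hf uM huMpos huMge
  set S : Set ℝ := {s : ℝ | ∃ h : ℕ → ℝ,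
        (∀ t : ℕ, 1 ≤ t → t + 1 ≤ n →
          -u t ≤ h (t + 1) - h t ∧ h (t + 1) - h t ≤ u t) ∧
        s = ∑ t ∈ Finset.Icc 1 n, |f t - h t|} with hSdef
  have hmem : S19.cost n f h ∈ S := ⟨h, hP, rfl⟩
  have hbdd : BddBelow S := by
    refine ⟨0, fun s hs => ?_⟩
    obtain ⟨g, _, rfl⟩ := hs
    exact Finset.sum_nonneg (fun t _ => abs_nonneg _)
  have hinf_le : sInf S ≤ S19.cost n f h := csInf_le hbdd hmem
  have hinf0 : 0 ≤ sInf S := by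
    refine le_csInf ⟨_, hmem⟩ (fun s hs => ?_)
    obtain ⟨g, _, rfl⟩ := hs
    exact Finset.sum_nonneg (fun t _ => abs_nonneg _)
  have hr : (0:ℝ) < b - a := by linarith
  have hnR : (0:ℝ) < (n:ℝ) - 1 := by
    have : (2:ℝ) ≤ (n:ℝ) := by exact_mod_cast hn
    linarith
  set K : ℝ := max uM ((b - a) / ((n:ℝ) - 1)) with hKdef
  have hKpos : 0 < K := lt_of_lt_of_le huMpos (le_max_left _ _)
  have hminK : min (1 / uM) (((n:ℝ) - 1) / (b - a)) = 1 / K := by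
    have hq : ((n:ℝ) - 1) / (b - a) = 1 / ((b - a) / ((n:ℝ) - 1)) := by
      rw [one_div_div]
    rw [hq, hKdef]
    rcases le_total uM ((b - a) / ((n:ℝ) - 1)) with hle | hle
    · rw [max_eq_right hle, min_eq_right (one_div_le_one_div_of_le huMpos hle)]
    · rw [max_eq_left hle]
      exact min_eq_left (one_div_le_one_div_of_le (div_pos hr hnR) hle)
  rw [hminK]
  have hC : S19.cost n f h ≤ 4 * K * ((S19.Vset n u f).card : ℝ) := hc
  have hfinal : sInf S ≤ 4 * K * ((S19.Vset n u f).card : ℝ) := le_trans hinf_le hC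
  have : sInf S / 4 * (1 / K) = sInf S / (4 * K) := by
    field_simp
  rw [this, div_le_iff₀ (by positivity)]
  calc sInf S ≤ 4 * K * ((S19.Vset n u f).card : ℝ) := hfinal
    _ = ((S19.Vset n u f).card : ℝ) * (4 * K) := by ring
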